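/- arXiv:2304.11566 — 5 statements merged into one kernel-verified Lean document; each statement's English description precedes it below -/
import Mathlib

section
/- Let e = [0,1] with barycentric coordinates λ0 = 1−t, λ1 = t, and let k ≥ 8. If u ∈ (λ0λ1)^5 P_{k−8}(e), then its second derivative u'' lies in (λ0λ1)^3 P_{k−6}(e) and satisfies ∫_e u'' q = 0 for every q ∈ P_1(e). Conversely, every p ∈ (λ0λ1)^3 P_{k−6}(e) orthogonal to P_1(e) equals u'' for a unique u ∈ (λ0λ1)^5 P_{k−8}(e); i.e., the sequence 0 → (λ0λ1)^5 P_{k−8}(e) → (λ0λ1)^3 P_{k−6}(e)/P_1(e) → 0 with map d²/dt² is an exact complex. -/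
open Polynomial

noncomputable def antid (g : Polynomial ℝ) : Polynomial ℝ :=
  g.sum fun n a => C (a / (n + 1)) * X ^ (n + 1)

lemma antid_deriv (g : Polynomial ℝ) : derivative (antid g) = g := by
  conv_rhs => rw [← Polynomial.sum_C_mul_X_pow_eq g]
  rw [antid, Polynomial.sum, map_sum, Polynomial.sum]
  refine Finset.sum_congr rfl fun n _ => ?_
  rw [derivative_C_mul, derivative_X_pow, ← mul_assoc, ← C_mul,
    Nat.add_sub_cancel]
  congr 1
  rw [C_inj]
  push_cast
  field_simp

lemma antid_eval_zero (g : Polynomial ℝ) : (antid g).eval 0 = 0 := by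
  rw [antid, Polynomial.sum, eval_finset_sum]
  refine Finset.sum_eq_zero fun n _ => ?_
  simp

lemma poly_integ (R : Polynomial ℝ) :
    ∫ t in (0:ℝ)..1, (derivative R).eval t = R.eval 1 - R.eval 0 :=
  intervalIntegral.integral_eq_sub_of_hasDerivAt (fun x _ => R.hasDerivAt x)
    ((derivative R).continuous.intervalIntegrable _ _)

lemma second_deriv_zero {q : Polynomial ℝ} (hq : q.natDegree ≤ 1) :
    derivative (derivative q) = 0 := by
  have h1 : (derivative q).natDegree = 0 :=
    Nat.le_zero.mp ((natDegree_derivative_le q).trans (by omega))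
  rw [Polynomial.eq_C_of_natDegree_eq_zero h1, derivative_C]

lemma dvd_step {F G : Polynomial ℝ} {a : ℝ} {r : ℕ} (hFG : derivative F = G)
    (hdvd : (X - C a) ^ r ∣ G) (ha : F.eval a = 0) : (X - C a) ^ (r + 1) ∣ F := by
  by_cases hF : F = 0
  · simp [hF]
  have hG : G ≠ 0 := by
    rintro rfl
    have := Polynomial.natDegree_eq_zero_of_derivative_eq_zero hFG
    have hC := Polynomial.eq_C_of_natDegree_eq_zero this
    rw [hC] at ha
    simp only [eval_C] at ha
    rw [hC, ha] at hF
    simp at hF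
  have h1 : r ≤ rootMultiplicity a G := (Polynomial.le_rootMultiplicity_iff hG).mpr hdvd
  have h2 : rootMultiplicity a G = rootMultiplicity a F - 1 := by
    rw [← hFG]; exact Polynomial.derivative_rootMultiplicity_of_root ha
  have h3 : 0 < rootMultiplicity a F := (Polynomial.rootMultiplicity_pos hF).mpr ha
  exact (Polynomial.le_rootMultiplicity_iff hF).mp (by omega)

lemma natDeg_deriv_eq {p : Polynomial ℝ} (hp : p.natDegree ≠ 0) :
    (derivative p).natDegree = p.natDegree - 1 :=
  Polynomial.natDegree_eq_of_degree_eq_some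
    (Polynomial.degree_derivative_eq p (Nat.pos_of_ne_zero hp))

lemma b_deg : (X * (1 - X) : Polynomial ℝ).natDegree = 2 := by compute_degree!

lemma b_ne : (X * (1 - X) : Polynomial ℝ) ≠ 0 := fun h => by
  have := congrArg (eval (1/2 : ℝ)) h
  norm_num at this

/-- Exactness of the edge bubble complex
`0 → (λ0λ1)^5 P_{k-8}(e) → (λ0λ1)^3 P_{k-6}(e)/P_1(e) → 0` under `d²/dt²`,
on the edge `e = [0,1]` with `λ0 = 1 - t`, `λ1 = t`. -/
theorem stmt_0 (k : ℕ) (hk : 8 ≤ k) :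
    (∀ u1 : Polynomial ℝ, u1.natDegree ≤ k - 8 →
      (∃ p : Polynomial ℝ, p.natDegree ≤ k - 6 ∧
        derivative (derivative ((X * (1 - X)) ^ 5 * u1)) = (X * (1 - X)) ^ 3 * p) ∧
      (∀ q : Polynomial ℝ, q.natDegree ≤ 1 →
        ∫ t in (0:ℝ)..1,
          (derivative (derivative ((X * (1 - X)) ^ 5 * u1))).eval t * q.eval t = 0)) ∧
    (∀ p : Polynomial ℝ, p.natDegree ≤ k - 6 →
      (∀ q : Polynomial ℝ, q.natDegree ≤ 1 →
        ∫ t in (0:ℝ)..1, ((X * (1 - X)) ^ 3 * p).eval t * q.eval t = 0) →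
      ∃! u1 : Polynomial ℝ, u1.natDegree ≤ k - 8 ∧
        derivative (derivative ((X * (1 - X)) ^ 5 * u1)) = (X * (1 - X)) ^ 3 * p) := by
  constructor
  · intro u1 hu1
    set p : Polynomial ℝ := 20 * (1 - 2*X)^2 * u1 - 10 * (X*(1-X)) * u1
        + 10 * (X*(1-X)) * (1 - 2*X) * (derivative u1)
        + (X*(1-X))^2 * (derivative (derivative u1)) with hp_def
    have hId : derivative (derivative ((X * (1 - X)) ^ 5 * u1)) = (X * (1 - X)) ^ 3 * p := by
      simp only [hp_def, derivative_mul, derivative_add, derivative_sub, derivative_neg,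
        derivative_pow, derivative_X, derivative_one, derivative_ofNat, derivative_C,
        Nat.cast_ofNat, C_eq_natCast, map_ofNat, derivative_zero]
      ring
    constructor
    · refine ⟨p, ?_, hId⟩
      by_cases hp0 : p = 0
      · simp [hp0]
      · have hb3 : ((X * (1 - X)) ^ 3 : Polynomial ℝ) ≠ 0 := pow_ne_zero _ b_ne
        have hmul : ((X * (1 - X)) ^ 3 * p).natDegree = 6 + p.natDegree := by
          rw [natDegree_mul hb3 hp0, natDegree_pow, b_deg]
        have hw : ((X * (1 - X)) ^ 5 * u1).natDegree ≤ k + 2 := by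
          refine natDegree_mul_le.trans ?_
          rw [natDegree_pow, b_deg]
          omega
        have hw2 : (derivative (derivative ((X * (1 - X)) ^ 5 * u1))).natDegree ≤ k := by
          have h1 := natDegree_derivative_le ((X * (1 - X)) ^ 5 * u1)
          have h2 := natDegree_derivative_le (derivative ((X * (1 - X)) ^ 5 * u1))
          omega
        rw [hId, hmul] at hw2
        omega
    · intro q hq
      have hq2 := second_deriv_zero hq
      set w := (X * (1 - X)) ^ 5 * u1 with hw_def
      set R := derivative w * q - w * derivative q with hR_def
      have key : derivative (derivative w) * q = derivative R := by
        simp only [hR_def, derivative_sub, derivative_mul, hq2]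
        ring
      have hint : ∫ t in (0:ℝ)..1, (derivative (derivative w)).eval t * q.eval t
          = R.eval 1 - R.eval 0 := by
        rw [← poly_integ]
        congr 1
        funext t
        rw [← eval_mul, key]
      rw [hint]
      have hw0 : w.eval 0 = 0 := by simp [hw_def]
      have hw1 : w.eval 1 = 0 := by simp [hw_def]
      have hdw0 : (derivative w).eval 0 = 0 := by
        simp [hw_def, derivative_mul, derivative_pow]
      have hdw1 : (derivative w).eval 1 = 0 := by
        simp [hw_def, derivative_mul, derivative_pow]
      simp [hR_def, hw0, hw1, hdw0, hdw1]
  · intro p hpdeg horth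
    set g : Polynomial ℝ := (X * (1 - X)) ^ 3 * p with hg_def
    set F1 := antid g with hF1_def
    set F := antid F1 with hF_def
    have hF1d : derivative F1 = g := antid_deriv g
    have hFd : derivative F = F1 := antid_deriv F1
    have hF10 : F1.eval 0 = 0 := antid_eval_zero g
    have hF0 : F.eval 0 = 0 := antid_eval_zero F1
    have hgdeg : g.natDegree ≤ k := by
      refine natDegree_mul_le.trans ?_
      rw [natDegree_pow, b_deg]
      omega
    have hF11 : F1.eval 1 = 0 := by
      have h := horth 1 (by simp)
      have h2 : ∫ t in (0:ℝ)..1, (derivative F1).eval t = 0 := by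
        rw [hF1d]
        simpa using h
      rw [poly_integ] at h2
      rw [hF10] at h2
      linarith
    have hF1 : F.eval 1 = 0 := by
      set R := F - (X - 1) * F1 with hRdef
      have hR : derivative R = (1 - X) * g := by
        simp only [hRdef, derivative_sub, derivative_mul, hFd, hF1d, derivative_X,
          derivative_one]
        ring
      have h := horth (1 - X) (by compute_degree)
      have h2 : ∫ t in (0:ℝ)..1, (derivative R).eval t = 0 := by
        rw [hR]
        simpa [mul_comm] using h
      rw [poly_integ] at h2
      simp only [hRdef, eval_sub, eval_mul, eval_X, eval_one, hF0, hF10, hF11] at h2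
      linarith
    have hX3 : (X - C (0:ℝ)) ^ 3 ∣ g := by
      rw [C_0, sub_zero]
      exact ⟨(1 - X) ^ 3 * p, by rw [hg_def]; ring⟩
    have hX13 : (X - C (1:ℝ)) ^ 3 ∣ g := by
      rw [C_1]
      exact ⟨-(X ^ 3 * p), by rw [hg_def]; ring⟩
    have h4a : (X - C (0:ℝ)) ^ 4 ∣ F1 := dvd_step hF1d hX3 hF10
    have h4b : (X - C (1:ℝ)) ^ 4 ∣ F1 := dvd_step hF1d hX13 hF11
    have h5a : (X - C (0:ℝ)) ^ 5 ∣ F := dvd_step hFd h4a hF0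
    have h5b : (X - C (1:ℝ)) ^ 5 ∣ F := dvd_step hFd h4b hF1
    have hcop : IsCoprime ((X - C (0:ℝ)) ^ 5) ((X - C (1:ℝ)) ^ 5) := by
      refine IsCoprime.pow ?_
      exact ⟨1, -1, by rw [C_0, C_1]; ring⟩
    obtain ⟨v, hv⟩ := hcop.mul_dvd h5a h5b
    rw [C_0, C_1] at hv
    have hFeq : (X * (1 - X)) ^ 5 * (-v) = F := by rw [hv]; ring
    have heq : derivative (derivative ((X * (1 - X)) ^ 5 * (-v))) = (X * (1 - X)) ^ 3 * p := by
      rw [hFeq, hFd, hF1d]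
    have hb5 : ((X * (1 - X)) ^ 5 : Polynomial ℝ).natDegree = 10 := by
      rw [natDegree_pow, b_deg]
    have hb5ne : ((X * (1 - X)) ^ 5 : Polynomial ℝ) ≠ 0 := pow_ne_zero _ b_ne
    have hdeg : (-v).natDegree ≤ k - 8 := by
      by_cases hv0 : v = 0
      · simp [hv0]
      · have hvne : (-v : Polynomial ℝ) ≠ 0 := neg_ne_zero.mpr hv0
        have hFne : F ≠ 0 := by
          rw [← hFeq]
          exact mul_ne_zero hb5ne hvne
        have hFdeg : F.natDegree = 10 + (-v).natDegree := by
          rw [← hFeq, natDegree_mul hb5ne hvne, hb5]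
        have hFd1 : (derivative F).natDegree = F.natDegree - 1 := natDeg_deriv_eq (by omega)
        rw [hFd] at hFd1
        have hFd2 : (derivative F1).natDegree = F1.natDegree - 1 := natDeg_deriv_eq (by omega)
        rw [hF1d] at hFd2
        omega
    refine ⟨-v, ⟨hdeg, heq⟩, ?_⟩
    rintro u2 ⟨hd2, he2⟩
    by_contra hne
    have hvne : u2 - -v ≠ 0 := sub_ne_zero.mpr hne
    have h0 : derivative (derivative ((X * (1 - X)) ^ 5 * (u2 - -v))) = 0 := by
      rw [mul_sub, derivative_sub, derivative_sub, he2, heq, sub_self]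
    have hprod : ((X * (1 - X)) ^ 5 * (u2 - -v)).natDegree = 10 + (u2 - -v).natDegree := by
      rw [natDegree_mul hb5ne hvne, hb5]
    have hd1 : (derivative ((X * (1 - X)) ^ 5 * (u2 - -v))).natDegree
        = ((X * (1 - X)) ^ 5 * (u2 - -v)).natDegree - 1 := natDeg_deriv_eq (by omega)
    have hd0 := Polynomial.natDegree_eq_zero_of_derivative_eq_zero h0
    omega
end

section
/- Let e = [0,1] and k ≥ 3. The derivative d/dt maps (λ0λ1)^2 P_{k−3}(e) bijectively onto the L²-orthogonal complement of constants in (λ0λ1) P_{k−2}(e); that is, 0 → (λ0λ1)^2 P_{k−3}(e) → (λ0λ1) P_{k−2}(e)/P_0(e) → 0 is exact. -/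
open Polynomial

private lemma exists_antideriv (q : Polynomial ℝ) :
    ∃ G : Polynomial ℝ, derivative G = q ∧ G.eval 0 = 0 := by
  induction q using Polynomial.induction_on' with
  | add p q hp hq =>
    obtain ⟨P, hP, hP0⟩ := hp; obtain ⟨Q, hQ, hQ0⟩ := hq
    exact ⟨P + Q, by simp [hP, hQ], by simp [hP0, hQ0]⟩
  | monomial n a =>
    refine ⟨C (a / (n + 1)) * X ^ (n + 1), ?_, by simp⟩
    have h : ((n : ℝ) + 1) ≠ 0 := by positivity
    rw [derivative_C_mul, derivative_X_pow]
    push_cast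
    rw [← mul_assoc, ← C_mul, div_mul_cancel₀ _ h, C_mul_X_pow_eq_monomial]

private lemma integral_deriv (q : Polynomial ℝ) :
    (∫ t in (0:ℝ)..1, (derivative q).eval t) = q.eval 1 - q.eval 0 := by
  exact intervalIntegral.integral_eq_sub_of_hasDerivAt (f := fun t => q.eval t)
    (fun x _ => q.hasDerivAt x) ((Polynomial.continuous _).intervalIntegrable _ _)

private lemma deriv_identity (u : Polynomial ℝ) :
    derivative ((X * (1 - X)) ^ 2 * u) =
      (X * (1 - X)) * (2 * (1 - 2 * X) * u + X * (1 - X) * derivative u) := by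
  simp only [derivative_mul, derivative_pow, derivative_sub, derivative_one,
    derivative_X, derivative_ofNat, Nat.cast_ofNat, map_ofNat]
  ring

private lemma sq_dvd {G : Polynomial ℝ} {a : ℝ} (h0 : G.eval a = 0)
    (h1 : (derivative G).eval a = 0) : (X - C a) ^ 2 ∣ G := by
  obtain ⟨h, rfl⟩ := (dvd_iff_isRoot.2 h0 : (X - C a) ∣ G)
  have hh : h.eval a = 0 := by
    have := h1
    simp only [derivative_mul, derivative_sub, derivative_X, derivative_C,
      sub_zero, one_mul, eval_add, eval_mul, eval_sub, eval_X, eval_C,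
      sub_self, zero_mul, add_zero, mul_zero, zero_add] at this
    linarith [this]
  obtain ⟨g, rfl⟩ := (dvd_iff_isRoot.2 hh : (X - C a) ∣ h)
  exact ⟨g, by ring⟩

private lemma natdeg_b2 : ((X * (1 - X) : Polynomial ℝ) ^ 2).natDegree = 4 := by
  have : ((X * (1 - X) : Polynomial ℝ) ^ 2) = X ^ 4 - 2 * X ^ 3 + X ^ 2 := by ring
  rw [this]
  compute_degree!

private lemma b2_ne_zero : ((X * (1 - X) : Polynomial ℝ) ^ 2) ≠ 0 := fun h => by
  have := natdeg_b2; rw [h] at this; simp at this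

/-- Exactness of the edge bubble complex
`0 → (λ0λ1)^2 P_{k-3}(e) → (λ0λ1) P_{k-2}(e)/P_0(e) → 0` under `d/dt`,
on the edge `e = [0,1]` with `λ0 = 1 - t`, `λ1 = t`. -/
theorem stmt_3 (k : ℕ) (hk : 3 ≤ k) :
    (∀ u1 : Polynomial ℝ, u1.natDegree ≤ k - 3 →
      (∃ p : Polynomial ℝ, p.natDegree ≤ k - 2 ∧
        derivative ((X * (1 - X)) ^ 2 * u1) = (X * (1 - X)) * p) ∧
      (∫ t in (0:ℝ)..1, (derivative ((X * (1 - X)) ^ 2 * u1)).eval t = 0)) ∧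
    (∀ p : Polynomial ℝ, p.natDegree ≤ k - 2 →
      (∫ t in (0:ℝ)..1, ((X * (1 - X)) * p).eval t = 0) →
      ∃! u1 : Polynomial ℝ, u1.natDegree ≤ k - 3 ∧
        derivative ((X * (1 - X)) ^ 2 * u1) = (X * (1 - X)) * p) := by
  constructor
  · intro u1 hu1
    constructor
    · refine ⟨2 * (1 - 2 * X) * u1 + X * (1 - X) * derivative u1, ?_, deriv_identity u1⟩
      apply le_trans (natDegree_add_le _ _)
      have hA : (2 * (1 - 2 * X) * u1 : Polynomial ℝ).natDegree ≤ k - 2 := by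
        apply le_trans (natDegree_mul_le)
        have h1 : ((2 : Polynomial ℝ) * (1 - 2 * X)).natDegree ≤ 1 := by compute_degree
        omega
      have hB : (X * (1 - X) * derivative u1 : Polynomial ℝ).natDegree ≤ k - 2 := by
        by_cases hd : derivative u1 = 0
        · simp only [hd, mul_zero, natDegree_zero]; omega
        · apply le_trans (natDegree_mul_le)
          have h1 : ((X : Polynomial ℝ) * (1 - X)).natDegree ≤ 2 := by compute_degree
          have h2 : (derivative u1).natDegree ≤ u1.natDegree - 1 :=
            natDegree_derivative_le _
          have h3 : u1.natDegree ≠ 0 := by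
            intro h; exact hd (derivative_of_natDegree_zero h)
          omega
      omega
    · rw [integral_deriv]
      simp
  · intro p hp hint
    obtain ⟨G, hG, hG0⟩ := exists_antideriv (X * (1 - X) * p)
    have hG1 : G.eval 1 = 0 := by
      have := integral_deriv G
      rw [hG, hint] at this
      linarith [this, hG0]
    have hd0 : (derivative G).eval 0 = 0 := by rw [hG]; simp
    have hd1 : (derivative G).eval 1 = 0 := by rw [hG]; simp
    have hdvd0 : (X - C (0:ℝ)) ^ 2 ∣ G := sq_dvd hG0 hd0
    have hdvd1 : (X - C (1:ℝ)) ^ 2 ∣ G := sq_dvd hG1 hd1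
    have hcop : IsCoprime ((X - C (0:ℝ)) ^ 2) ((X - C (1:ℝ)) ^ 2) := by
      apply IsCoprime.pow
      exact ⟨1, -1, by simp⟩
    obtain ⟨u, hu⟩ := hcop.mul_dvd hdvd0 hdvd1
    have hb2 : ((X : Polynomial ℝ) * (1 - X)) ^ 2 = (X - C 0) ^ 2 * (X - C 1) ^ 2 := by
      simp only [map_zero, map_one, sub_zero]; ring
    have hGu : G = (X * (1 - X)) ^ 2 * u := by rw [hb2]; exact hu
    have hder : derivative ((X * (1 - X)) ^ 2 * u) = X * (1 - X) * p := by
      rw [← hGu, hG]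
    have hdeg : u.natDegree ≤ k - 3 := by
      by_cases hu0 : u = 0
      · simp [hu0]
      · have hGne : G ≠ 0 := by
          rw [hGu]; exact mul_ne_zero b2_ne_zero hu0
        have hnd : G.natDegree = 4 + u.natDegree := by
          rw [hGu, natDegree_mul b2_ne_zero hu0, natdeg_b2]
        have hpos : 0 < G.natDegree := by omega
        have hdd : (derivative G).natDegree = G.natDegree - 1 := by
          have := degree_derivative_eq G hpos
          exact natDegree_eq_of_degree_eq_some this
        have hbp : (derivative G).natDegree ≤ k := by
          rw [hG]
          apply le_trans natDegree_mul_le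
          have h1 : ((X : Polynomial ℝ) * (1 - X)).natDegree ≤ 2 := by compute_degree
          omega
        omega
    refine ⟨u, ⟨hdeg, hder⟩, ?_⟩
    rintro v ⟨hv, hvder⟩
    by_contra hne
    have hsub : derivative ((X * (1 - X)) ^ 2 * (v - u)) = 0 := by
      rw [mul_sub, derivative_sub, hvder, hder, sub_self]
    have h0 : ((X * (1 - X)) ^ 2 * (v - u) : Polynomial ℝ).natDegree = 0 :=
      natDegree_eq_zero_of_derivative_eq_zero hsub
    have hvu : v - u ≠ 0 := sub_ne_zero.2 hne
    rw [natDegree_mul b2_ne_zero hvu, natdeg_b2] at h0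
    omega
end

section
/- Let f be a nondegenerate triangle in R² with barycentric coordinates λ0, λ1, λ2 and k ≥ 7. If w = (λ0λ1λ2) w1 with w1 ∈ P^{(0)}_{k−3}(f; R²), then rot w := −∂w₂/∂x + ∂w₁/∂y lies in P^{(1)}_{k−1}(f) (polynomials of degree ≤ k−1 vanishing to first order at all vertices of f), and ∫_f rot w = 0. -/
open MvPolynomial MeasureTheory Set

lemma myHasDerivAt_eval (p : MvPolynomial (Fin 2) ℝ) (c : Fin 2 → ℝ) (i : Fin 2) (y : ℝ) :
    HasDerivAt (fun t => eval (Function.update c i t) p)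
      (eval (Function.update c i y) (pderiv i p)) y := by
  induction p using MvPolynomial.induction_on with
  | C a => simpa using hasDerivAt_const y a
  | add p q hp hq => simp only [map_add]; exact hp.add hq
  | mul_X p j hp =>
      have hx : HasDerivAt (fun t => Function.update c i t j)
          (if j = i then 1 else 0) y := by
        by_cases h : j = i
        · subst h; simp; exact hasDerivAt_id' y
        · simp only [h, if_false, Function.update_of_ne h]
          exact hasDerivAt_const y (c j)
      have H := hp.mul hx
      simp only [pderiv_mul, map_add, map_mul, eval_X, pderiv_X]
      exact H.congr_deriv (by by_cases h : j = i  <;>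
        simp [h, Function.update_self, Pi.single_apply])


lemma myTotalDegree_pderiv_le (i : Fin 2) (p : MvPolynomial (Fin 2) ℝ) :
    (pderiv i p).totalDegree ≤ p.totalDegree - 1 := by
  conv_lhs => rw [p.as_sum]
  rw [map_sum]
  apply totalDegree_finsetSum_le
  intro m hm
  rw [pderiv_monomial]
  by_cases h : m i = 0
  · simp [h]
  · refine (totalDegree_monomial_le _ _).trans ?_
    simp only [Function.id_def]
    have hle : Finsupp.single i 1 ≤ m := by
      rw [Finsupp.single_le_iff]; omega
    have hs : m = (m - Finsupp.single i 1) + Finsupp.single i 1 :=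
      (tsub_add_cancel_of_le hle).symm
    have hsum : m.sum (fun _ e => e) =
        (m - Finsupp.single i 1).sum (fun _ e => e) + 1 := by
      conv_lhs => rw [hs]
      rw [Finsupp.sum_add_index (by simp) (by intros; rfl)]
      simp
    have := le_totalDegree hm
    omega


lemma myEval_deg_le_one (p : MvPolynomial (Fin 2) ℝ) (hp : p.totalDegree ≤ 1) (x : Fin 2 → ℝ) :
    eval x p = coeff 0 p + coeff (Finsupp.single 0 1) p * x 0
      + coeff (Finsupp.single 1 1) p * x 1 := by
  have h01 : (Finsupp.single (0 : Fin 2) 1 : Fin 2 →₀ ℕ) ≠ Finsupp.single 1 1 := by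
    intro h
    have := DFunLike.congr_fun h 0
    simp [Finsupp.single_apply] at this
  have h0 : (0 : Fin 2 →₀ ℕ) ≠ Finsupp.single 0 1 := by
    intro h
    have := DFunLike.congr_fun h 0
    simp [Finsupp.single_apply] at this
  have h1 : (0 : Fin 2 →₀ ℕ) ≠ Finsupp.single 1 1 := by
    intro h
    have := DFunLike.congr_fun h 1
    simp [Finsupp.single_apply] at this
  have hsub : p.support ⊆ ({0, Finsupp.single 0 1, Finsupp.single 1 1} : Finset (Fin 2 →₀ ℕ)) := by
    intro m hm
    have hms : m.sum (fun _ e => e) ≤ 1 := (le_totalDegree hm).trans hp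
    rw [Finsupp.sum_fintype _ _ (fun _ => rfl)] at hms
    rw [Fin.sum_univ_two] at hms
    simp only [Finset.mem_insert, Finset.mem_singleton]
    rcases Nat.le_one_iff_eq_zero_or_eq_one.mp hms with h | h
    · left
      ext d
      fin_cases d <;> simp <;> omega
    · rcases Nat.add_eq_one_iff.mp h with ⟨ha, hb⟩ | ⟨ha, hb⟩
      · right; right
        ext d; fin_cases d <;> simp [Finsupp.single_apply, ha, hb]
      · right; left
        ext d; fin_cases d <;> simp [Finsupp.single_apply, ha, hb]
  rw [eval_eq]
  rw [Finset.sum_subset hsub]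
  · rw [Finset.sum_insert (by simp [h0, h1]), Finset.sum_insert (by simp [h01]),
      Finset.sum_singleton]
    simp [Fin.prod_univ_two, Finsupp.single_apply]
    ring
  · intro m _ hm
    simp [notMem_support_iff.mp hm]



lemma myEval_affine (p : MvPolynomial (Fin 2) ℝ) (hp : p.totalDegree ≤ 1)
    (t : Fin 3 → ℝ) (ht : ∑ j, t j = 1) (v : Fin 3 → Fin 2 → ℝ) :
    eval (∑ j, t j • v j) p = ∑ j, t j * eval (v j) p := by
  rw [Fin.sum_univ_three] at ht
  simp only [myEval_deg_le_one p hp, Fin.sum_univ_three, Pi.add_apply, Pi.smul_apply,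
    smul_eq_mul]
  linear_combination (-(coeff 0 p)) * ht

lemma myCoord_eq (v : Fin 3 → Fin 2 → ℝ) (B : AffineBasis (Fin 3) ℝ (Fin 2 → ℝ))
    (hB : ⇑B = v) (lam : Fin 3 → MvPolynomial (Fin 2) ℝ)
    (hdeg : ∀ i, (lam i).totalDegree ≤ 1)
    (heval : ∀ i j, eval (v j) (lam i) = if i = j then 1 else 0)
    (i : Fin 3) (x : Fin 2 → ℝ) : B.coord i x = eval x (lam i) := by
  have hx := B.linear_combination_coord_eq_self x
  have hsum := B.sum_coord_apply_eq_one x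
  conv_rhs => rw [← hx, hB]
  rw [myEval_affine _ (hdeg i) _ hsum]
  simp [heval, mul_ite]




lemma mySlice (T : Set (Fin 2 → ℝ)) (hTcomp : IsCompact T) (hTconv : Convex ℝ T)
    (p : MvPolynomial (Fin 2) ℝ)
    (hbd : ∀ z ∈ T, z ∉ interior T → eval z p = 0)
    (c : Fin 2 → ℝ) (i : Fin 2) :
    ∫ t in {t : ℝ | Function.update c i t ∈ T},
      eval (Function.update c i t) (pderiv i p) = 0 := by
  set s : Set ℝ := {t | Function.update c i t ∈ T} with hsdef
  have hcont : Continuous (fun t : ℝ => Function.update c i t) := by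
    apply continuous_pi
    intro j
    by_cases h : j = i
    · subst h; simpa using continuous_id'
    · simpa [Function.update_of_ne h] using continuous_const
  have hclosed : IsClosed s := hTcomp.isClosed.preimage hcont
  obtain ⟨R, hR⟩ := (isBounded_iff_forall_norm_le).mp hTcomp.isBounded
  have hsub : s ⊆ Icc (-R) R := by
    intro t ht
    have h1 : |t| ≤ R := by
      have := norm_le_pi_norm (Function.update c i t) i
      simp only [Function.update_self] at this
      exact le_trans (by simpa using this) (hR _ ht)
    constructor <;> [linarith [abs_le.mp h1] ; linarith [abs_le.mp h1]]
  have hba : BddAbove s := ⟨R, fun t ht => (hsub ht).2⟩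
  have hbb : BddBelow s := ⟨-R, fun t ht => (hsub ht).1⟩
  rcases s.eq_empty_or_nonempty with he | hne
  · rw [he]; exact setIntegral_empty
  have hconv : Convex ℝ s := by
    intro t1 h1 t2 h2 a b ha hb hab
    have : Function.update c i (a • t1 + b • t2)
        = a • Function.update c i t1 + b • Function.update c i t2 := by
      funext j
      by_cases h : j = i
      · subst h; simp
      · simp [Function.update_of_ne h]
        rw [← add_mul, hab, one_mul]
    show Function.update c i (a • t1 + b • t2) ∈ T
    rw [this]
    exact hTconv h1 h2 ha hb hab
  set α := sInf s with hα
  set β := sSup s with hβ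
  have hαs : α ∈ s := hclosed.csInf_mem hne hbb
  have hβs : β ∈ s := hclosed.csSup_mem hne hba
  have hab : α ≤ β := csInf_le hbb hβs
  have hseq : s = Icc α β := by
    apply Subset.antisymm
    · intro t ht; exact ⟨csInf_le hbb ht, le_csSup hba ht⟩
    · exact hconv.ordConnected.out hαs hβs
  -- endpoints are not interior points
  have hnotint : ∀ t ∈ s, (∀ u ∈ s, u ≤ t) ∨ (∀ u ∈ s, t ≤ u) →
      True := fun _ _ _ => trivial
  have hext : ∀ t, t ∈ s → ((∀ u ∈ s, u ≤ t) ∨ (∀ u ∈ s, t ≤ u)) →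
      eval (Function.update c i t) p = 0 := by
    intro t hts hmax
    apply hbd _ hts
    intro hint
    obtain ⟨ε, hε, hball⟩ := Metric.isOpen_iff.mp isOpen_interior _ hint
    rcases hmax with hmax | hmin
    · have : t + ε / 2 ∈ s := by
        have hmem : Function.update c i (t + ε / 2) ∈ Metric.ball (Function.update c i t) ε := by
          rw [Metric.mem_ball]
          rw [dist_pi_lt_iff hε]
          intro j
          by_cases h : j = i
          · subst h
            simp only [Function.update_self, Real.dist_eq]
            have h2 : t + ε / 2 - t = ε / 2 := by ring
            rw [h2, abs_of_pos (by linarith)]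
            linarith
          · simp [Function.update_of_ne h, hε]
        have hmem2 : Function.update c i (t + ε / 2) ∈ T := interior_subset (hball hmem)
        exact hmem2
      linarith [hmax _ this]
    · have : t - ε / 2 ∈ s := by
        have hmem : Function.update c i (t - ε / 2) ∈ Metric.ball (Function.update c i t) ε := by
          rw [Metric.mem_ball, dist_pi_lt_iff hε]
          intro j
          by_cases h : j = i
          · subst h
            simp only [Function.update_self, Real.dist_eq]
            have h2 : t - ε / 2 - t = -(ε / 2) := by ring
            rw [h2, abs_neg, abs_of_pos (by linarith)]
            linarith
          · simp [Function.update_of_ne h, hε]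
        have hmem2 : Function.update c i (t - ε / 2) ∈ T := interior_subset (hball hmem)
        exact hmem2
      linarith [hmin _ this]
  have hβ0 : eval (Function.update c i β) p = 0 :=
    hext β hβs (Or.inl fun u hu => le_csSup hba hu)
  have hα0 : eval (Function.update c i α) p = 0 :=
    hext α hαs (Or.inr fun u hu => csInf_le hbb hu)
  have hderiv : ∀ t ∈ uIcc α β, HasDerivAt (fun u => eval (Function.update c i u) p)
      (eval (Function.update c i t) (pderiv i p)) t :=
    fun t _ => myHasDerivAt_eval p c i t
  have hcint : Continuous fun t => eval (Function.update c i t) (pderiv i p) := by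
    show Continuous ((fun x => eval x (pderiv i p)) ∘ fun t => Function.update c i t)
    exact (MvPolynomial.continuous_eval _).comp hcont
  rw [hseq, MeasureTheory.integral_Icc_eq_integral_Ioc, ← intervalIntegral.integral_of_le hab,
    intervalIntegral.integral_eq_sub_of_hasDerivAt hderiv (hcint.intervalIntegrable _ _),
    hβ0, hα0, sub_zero]



lemma myIntegral_pderiv (T : Set (Fin 2 → ℝ)) (hTcomp : IsCompact T) (hTconv : Convex ℝ T)
    (p : MvPolynomial (Fin 2) ℝ)
    (hbd : ∀ z ∈ T, z ∉ interior T → eval z p = 0) (i : Fin 2) :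
    ∫ x in T, eval x (pderiv i p) = 0 := by
  set e : (Fin 2 → ℝ) ≃ᵐ ℝ × ℝ := MeasurableEquiv.finTwoArrow with he
  have hsymm : ∀ z : ℝ × ℝ, e.symm z = ![z.1, z.2] := by
    intro z; funext j; fin_cases j <;> rfl
  have hmp : MeasurePreserving e.symm (volume : Measure (ℝ × ℝ)) volume :=
    (volume_preserving_finTwoArrow ℝ).symm
  have hvol : (volume : Measure (Fin 2 → ℝ)) = Measure.map e.symm volume := hmp.map_eq.symm
  rw [hvol, MeasureTheory.setIntegral_map_equiv]
  set S : Set (ℝ × ℝ) := e.symm ⁻¹' T with hS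
  have hcsymm : Continuous fun z : ℝ × ℝ => e.symm z := by
    simp only [hsymm]
    apply continuous_pi
    intro j; fin_cases j
    · exact continuous_fst
    · exact continuous_snd
  have hSim : S = (fun c : Fin 2 → ℝ => (c 0, c 1)) '' T := by
    ext z
    simp only [hS, mem_preimage, mem_image]
    constructor
    · intro h; exact ⟨e.symm z, h, by rw [hsymm]; simp⟩
    · rintro ⟨c, hc, rfl⟩
      have : e.symm (c 0, c 1) = c := by
        rw [hsymm]; funext j; fin_cases j <;> rfl
      rwa [this]
  have hScomp : IsCompact S := by
    rw [hSim]
    exact hTcomp.image (by continuity)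
  have hSmeas : MeasurableSet S := hScomp.isClosed.measurableSet
  have hgc : Continuous fun z : ℝ × ℝ => eval (e.symm z) (pderiv i p) := by
    show Continuous ((fun x => eval x (pderiv i p)) ∘ fun z : ℝ × ℝ => e.symm z)
    exact (MvPolynomial.continuous_eval _).comp hcsymm
  have hgint : IntegrableOn (fun z => eval (e.symm z) (pderiv i p)) S volume :=
    hgc.continuousOn.integrableOn_compact hScomp
  rw [← MeasureTheory.integral_indicator hSmeas]
  have hint : Integrable (S.indicator fun z => eval (e.symm z) (pderiv i p)) volume :=
    (integrable_indicator_iff hSmeas).mpr hgint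
  rw [Measure.volume_eq_prod] at hint ⊢
  have hi : i = 0 ∨ i = 1 := by omega
  rcases hi with rfl | rfl
  · -- derivative in coordinate 0 : inner integral over first variable
    rw [MeasureTheory.integral_prod_symm _ hint]
    have hzero : ∀ b : ℝ, (∫ a : ℝ,
        S.indicator (fun z => eval (e.symm z) (pderiv 0 p)) (a, b)) = 0 := by
      intro b
      have hrw : (fun a : ℝ => S.indicator (fun z => eval (e.symm z) (pderiv 0 p)) (a, b))
          = ({t : ℝ | Function.update ![(0:ℝ), b] 0 t ∈ T}).indicator
              (fun a => eval (Function.update ![(0:ℝ), b] 0 a) (pderiv 0 p)) := by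
        funext a
        have hupd : Function.update ![(0:ℝ), b] 0 a = ![a, b] := by
          funext j; fin_cases j <;> simp [Function.update]
        have hmem : ((a, b) ∈ S) ↔ (Function.update ![(0:ℝ), b] 0 a ∈ T) := by
          rw [hupd, hS, mem_preimage, hsymm]
        by_cases h : (a, b) ∈ S
        · rw [indicator_of_mem h, indicator_of_mem (by exact hmem.mp h), hupd, hsymm]
        · have h2 : a ∉ {t : ℝ | Function.update ![(0:ℝ), b] 0 t ∈ T} :=
            fun hx => h (hmem.mpr hx)
          rw [indicator_of_notMem h, indicator_of_notMem h2]
      rw [hrw]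
      have hmeas2 : MeasurableSet {t : ℝ | Function.update ![(0:ℝ), b] 0 t ∈ T} := by
        have : Continuous fun t : ℝ => Function.update ![(0:ℝ), b] 0 t := by
          apply continuous_pi; intro j
          by_cases h : j = 0
          · subst h; simpa using continuous_id'
          · simpa [Function.update_of_ne h] using continuous_const
        exact (hTcomp.isClosed.preimage this).measurableSet
      rw [MeasureTheory.integral_indicator hmeas2]
      exact mySlice T hTcomp hTconv p hbd ![(0:ℝ), b] 0
    simp only [hzero, integral_zero]
  · rw [MeasureTheory.integral_prod _ hint]
    have hzero : ∀ a : ℝ, (∫ b : ℝ,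
        S.indicator (fun z => eval (e.symm z) (pderiv 1 p)) (a, b)) = 0 := by
      intro a
      have hrw : (fun b : ℝ => S.indicator (fun z => eval (e.symm z) (pderiv 1 p)) (a, b))
          = ({t : ℝ | Function.update ![a, (0:ℝ)] 1 t ∈ T}).indicator
              (fun b => eval (Function.update ![a, (0:ℝ)] 1 b) (pderiv 1 p)) := by
        funext b
        have hupd : Function.update ![a, (0:ℝ)] 1 b = ![a, b] := by
          funext j; fin_cases j <;> simp [Function.update]
        have hmem : ((a, b) ∈ S) ↔ (Function.update ![a, (0:ℝ)] 1 b ∈ T) := by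
          rw [hupd, hS, mem_preimage, hsymm]
        by_cases h : (a, b) ∈ S
        · rw [indicator_of_mem h, indicator_of_mem (by exact hmem.mp h), hupd, hsymm]
        · have h2 : b ∉ {t : ℝ | Function.update ![a, (0:ℝ)] 1 t ∈ T} :=
            fun hx => h (hmem.mpr hx)
          rw [indicator_of_notMem h, indicator_of_notMem h2]
      rw [hrw]
      have hmeas2 : MeasurableSet {t : ℝ | Function.update ![a, (0:ℝ)] 1 t ∈ T} := by
        have : Continuous fun t : ℝ => Function.update ![a, (0:ℝ)] 1 t := by
          apply continuous_pi; intro j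
          by_cases h : j = 1
          · subst h; simpa using continuous_id'
          · simpa [Function.update_of_ne h] using continuous_const
        exact (hTcomp.isClosed.preimage this).measurableSet
      rw [MeasureTheory.integral_indicator hmeas2]
      exact mySlice T hTcomp hTconv p hbd ![a, (0:ℝ)] 1
    simp only [hzero, integral_zero]

set_option maxHeartbeats 1600000 in
/-- If `w = (λ0λ1λ2) w1` with `w1 ∈ P⁰_{k-3}(f; ℝ²)`, then
`rot w = -∂w₂/∂x + ∂w₁/∂y` lies in `P¹_{k-1}(f)` (degree `≤ k-1`, value and
gradient vanishing at the three vertices of `f`) and has zero mean over `f`. -/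
theorem stmt_5 (k : ℕ) (hk : 7 ≤ k)
    (v : Fin 3 → Fin 2 → ℝ) (hv : AffineIndependent ℝ v)
    (lam : Fin 3 → MvPolynomial (Fin 2) ℝ)
    (hdeg : ∀ i, (lam i).totalDegree ≤ 1)
    (heval : ∀ i j, eval (v j) (lam i) = if i = j then 1 else 0)
    (w1 : Fin 2 → MvPolynomial (Fin 2) ℝ)
    (hw1 : ∀ i, (w1 i).totalDegree ≤ k - 3)
    (hw1v : ∀ i j, eval (v j) (w1 i) = 0) :
    (pderiv 1 (lam 0 * lam 1 * lam 2 * w1 0) -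
      pderiv 0 (lam 0 * lam 1 * lam 2 * w1 1)).totalDegree ≤ k - 1 ∧
    (∀ j, eval (v j)
      (pderiv 1 (lam 0 * lam 1 * lam 2 * w1 0) -
        pderiv 0 (lam 0 * lam 1 * lam 2 * w1 1)) = 0) ∧
    (∀ j i, eval (v j) (pderiv i
      (pderiv 1 (lam 0 * lam 1 * lam 2 * w1 0) -
        pderiv 0 (lam 0 * lam 1 * lam 2 * w1 1))) = 0) ∧
    (∫ x in convexHull ℝ (Set.range v),
      eval x (pderiv 1 (lam 0 * lam 1 * lam 2 * w1 0) -
        pderiv 0 (lam 0 * lam 1 * lam 2 * w1 1)) = 0) := by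

  set P1 := lam 0 * lam 1 * lam 2 * w1 0 with hP1
  set P2 := lam 0 * lam 1 * lam 2 * w1 1 with hP2
  have hdP : ∀ m, (lam 0 * lam 1 * lam 2 * w1 m).totalDegree ≤ k := by
    intro m
    have h1 := totalDegree_mul (lam 0 * lam 1 * lam 2) (w1 m)
    have h2 := totalDegree_mul (lam 0 * lam 1) (lam 2)
    have h3 := totalDegree_mul (lam 0) (lam 1)
    have := hdeg 0; have := hdeg 1; have := hdeg 2; have := hw1 m
    omega
  have hdeg1 : ∀ m (i : Fin 2),
      (pderiv i (lam 0 * lam 1 * lam 2 * w1 m)).totalDegree ≤ k - 1 := by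
    intro m i
    have := myTotalDegree_pderiv_le i (lam 0 * lam 1 * lam 2 * w1 m)
    have := hdP m
    omega
  refine ⟨?_, ?_, ?_, ?_⟩
  · rw [sub_eq_add_neg]
    refine (totalDegree_add _ _).trans ?_
    rw [totalDegree_neg]
    exact max_le (hdeg1 0 1) (hdeg1 1 0)
  · intro j
    fin_cases j <;>
      simp [hP1, hP2, pderiv_mul, heval, hw1v]
  · intro j i
    fin_cases j <;> fin_cases i <;>
      · simp only [hP1, hP2, pderiv_mul, map_add, map_mul, map_sub]
        simp [heval, hw1v]
  · set T := convexHull ℝ (Set.range v) with hT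
    have hTcomp : IsCompact T := (Set.finite_range v).isCompact_convexHull (𝕜 := ℝ)
    have hTconv : Convex ℝ T := convex_convexHull ℝ _
    have htop : affineSpan ℝ (Set.range v) = ⊤ := by
      rw [hv.affineSpan_eq_top_iff_card_eq_finrank_add_one]
      simp
    let B : AffineBasis (Fin 3) ℝ (Fin 2 → ℝ) := ⟨v, hv, htop⟩
    have hB : ⇑B = v := rfl
    have hlamzero : ∀ z ∈ T, z ∉ interior T → ∃ i, eval z (lam i) = 0 := by
      intro z hz hnz
      have hhull : T = {x | ∀ i, 0 ≤ B.coord i x} := by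
        rw [hT, ← hB, B.convexHull_eq_nonneg_coord]
      have hint : interior T = {x | ∀ i, 0 < B.coord i x} := by
        rw [hT, ← hB, B.interior_convexHull]
      rw [hhull] at hz
      simp only [Set.mem_setOf_eq] at hz
      rw [hint] at hnz
      simp only [Set.mem_setOf_eq] at hnz hz ⊢
      push_neg at hnz
      obtain ⟨i, hi⟩ := hnz
      refine ⟨i, ?_⟩
      rw [← myCoord_eq v B hB lam hdeg heval i z]
      exact le_antisymm hi (hz i)
    have hbd : ∀ m, ∀ z ∈ T, z ∉ interior T →
        eval z (lam 0 * lam 1 * lam 2 * w1 m) = 0 := by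
      intro m z hz hnz
      obtain ⟨i, hi⟩ := hlamzero z hz hnz
      fin_cases i <;> simp [map_mul, hi] at hi ⊢ <;> simp [hi]
    have hi1 := myIntegral_pderiv T hTcomp hTconv (lam 0 * lam 1 * lam 2 * w1 0) (hbd 0) 1
    have hi0 := myIntegral_pderiv T hTcomp hTconv (lam 0 * lam 1 * lam 2 * w1 1) (hbd 1) 0
    have hint1 : IntegrableOn (fun x => eval x (pderiv 1 P1)) T volume :=
      (MvPolynomial.continuous_eval _).continuousOn.integrableOn_compact hTcomp
    have hint0 : IntegrableOn (fun x => eval x (pderiv 0 P2)) T volume :=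
      (MvPolynomial.continuous_eval _).continuousOn.integrableOn_compact hTcomp
    calc ∫ x in T, eval x (pderiv 1 P1 - pderiv 0 P2)
        = ∫ x in T, (eval x (pderiv 1 P1) - eval x (pderiv 0 P2)) := by
          simp only [map_sub]
      _ = (∫ x in T, eval x (pderiv 1 P1)) - ∫ x in T, eval x (pderiv 0 P2) :=
          integral_sub hint1 hint0
      _ = 0 := by rw [hi1, hi0, sub_zero]
end

section
/- Let f be a nondegenerate triangle in R² and k ≥ 7. If ξ ∈ (λ0λ1λ2) P^{(0)}_{k−3}(f; R²) satisfies rot ξ = 0, then there exists u ∈ (λ0λ1λ2)² P_{k−5}(f) such that ξ = ∇u. -/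
open MvPolynomial

set_option linter.unusedVariables false
set_option linter.unnecessarySeqFocus false
set_option maxHeartbeats 1600000

namespace Stmt6Aux

noncomputable section

abbrev P2 := MvPolynomial (Fin 2) ℝ

lemma sum_fin2 (d : Fin 2 →₀ ℕ) : (d.sum fun _ e => e) = d 0 + d 1 := by
  rw [Finsupp.sum_fintype _ _ (fun _ => rfl), Fin.sum_univ_two]

lemma tdeg_le_iff {p : P2} {n : ℕ} :
    p.totalDegree ≤ n ↔ ∀ d ∈ p.support, d 0 + d 1 ≤ n := by
  rw [totalDegree, Finset.sup_le_iff]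
  simp only [sum_fin2]

lemma sub_single_eq_iff {s d : Fin 2 →₀ ℕ} {i : Fin 2} (hs : s i ≠ 0) :
    s - Finsupp.single i 1 = d ↔ s = d + Finsupp.single i 1 := by
  constructor <;> intro h <;> ext x <;> have hx := DFunLike.congr_fun h x <;>
    rcases eq_or_ne i x with rfl | hxi
  · rw [Finsupp.tsub_apply, Finsupp.single_eq_same] at hx
    rw [Finsupp.add_apply, Finsupp.single_eq_same]
    omega
  · rw [Finsupp.tsub_apply, Finsupp.single_eq_of_ne' hxi] at hx
    rw [Finsupp.add_apply, Finsupp.single_eq_of_ne' hxi]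
    omega
  · rw [Finsupp.add_apply, Finsupp.single_eq_same] at hx
    rw [Finsupp.tsub_apply, Finsupp.single_eq_same]
    omega
  · rw [Finsupp.add_apply, Finsupp.single_eq_of_ne' hxi] at hx
    rw [Finsupp.tsub_apply, Finsupp.single_eq_of_ne' hxi]
    omega

lemma add_single_eq_iff {s d : Fin 2 →₀ ℕ} {i : Fin 2} (hd : d i ≠ 0) :
    s + Finsupp.single i 1 = d ↔ s = d - Finsupp.single i 1 := by
  constructor <;> intro h <;> ext x <;> have hx := DFunLike.congr_fun h x <;>
    rcases eq_or_ne i x with rfl | hxi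
  · rw [Finsupp.add_apply, Finsupp.single_eq_same] at hx
    rw [Finsupp.tsub_apply, Finsupp.single_eq_same]
    omega
  · rw [Finsupp.add_apply, Finsupp.single_eq_of_ne' hxi] at hx
    rw [Finsupp.tsub_apply, Finsupp.single_eq_of_ne' hxi]
    omega
  · rw [Finsupp.tsub_apply, Finsupp.single_eq_same] at hx
    rw [Finsupp.add_apply, Finsupp.single_eq_same]
    omega
  · rw [Finsupp.tsub_apply, Finsupp.single_eq_of_ne' hxi] at hx
    rw [Finsupp.add_apply, Finsupp.single_eq_of_ne' hxi]
    omega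

lemma coeff_pderiv (i : Fin 2) (d : Fin 2 →₀ ℕ) (p : P2) :
    coeff d (pderiv i p) = coeff (d + Finsupp.single i 1) p * ((d i : ℝ) + 1) := by
  induction p using MvPolynomial.induction_on' with
  | monomial s a =>
    rw [pderiv_monomial]
    by_cases hs : s i = 0
    · have h1 : s - Finsupp.single i 1 = s := by
        ext x
        rcases eq_or_ne i x with rfl | hxi
        · rw [Finsupp.tsub_apply, Finsupp.single_eq_same]; omega
        · rw [Finsupp.tsub_apply, Finsupp.single_eq_of_ne' hxi]; omega
      have h2 : s ≠ d + Finsupp.single i 1 := by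
        intro h
        have hx := DFunLike.congr_fun h i
        rw [Finsupp.add_apply, Finsupp.single_eq_same] at hx
        omega
      rw [h1, coeff_monomial, coeff_monomial, if_neg h2, zero_mul]
      split
      · simp [hs]
      · rfl
    · rw [coeff_monomial, coeff_monomial]
      by_cases h : s = d + Finsupp.single i 1
      · have hd : s i = d i + 1 := by
          have hx := DFunLike.congr_fun h i
          rwa [Finsupp.add_apply, Finsupp.single_eq_same] at hx
        rw [if_pos ((sub_single_eq_iff hs).mpr h), if_pos h, hd]
        push_cast; ring
      · rw [if_neg (fun hc => h ((sub_single_eq_iff hs).mp hc)), if_neg h, zero_mul]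
  | add p q hp hq => simp [map_add, coeff_add, hp, hq, add_mul]

/-- Antiderivative with respect to variable `i`. -/
def integ (i : Fin 2) (p : P2) : P2 :=
  ∑ d ∈ p.support, monomial (d + Finsupp.single i 1) (coeff d p / (d i + 1))

lemma coeff_integ (i : Fin 2) (p : P2) (d : Fin 2 →₀ ℕ) :
    coeff d (integ i p) =
      if d i = 0 then 0 else coeff (d - Finsupp.single i 1) p / (d i : ℝ) := by
  rw [integ, coeff_sum]
  by_cases hd : d i = 0
  · rw [if_pos hd, Finset.sum_eq_zero]
    intro s _
    rw [coeff_monomial, if_neg]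
    intro h
    have hx := DFunLike.congr_fun h i
    rw [Finsupp.add_apply, Finsupp.single_eq_same] at hx
    omega
  · rw [if_neg hd]
    have hdi : (((d - Finsupp.single i 1 : Fin 2 →₀ ℕ) i : ℕ) : ℝ) + 1 = (d i : ℝ) := by
      rw [Finsupp.tsub_apply, Finsupp.single_eq_same]
      have h1 : d i - 1 + 1 = d i := by omega
      rw [show ((d i - 1 : ℕ) : ℝ) + 1 = ((d i - 1 + 1 : ℕ) : ℝ) by push_cast; ring, h1]
    simp only [coeff_monomial, add_single_eq_iff hd]
    rw [Finset.sum_ite_eq' p.support (d - Finsupp.single i 1)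
      (fun s => coeff s p / ((s i : ℝ) + 1))]
    by_cases hmem : d - Finsupp.single i 1 ∈ p.support
    · rw [if_pos hmem, hdi]
    · rw [if_neg hmem, MvPolynomial.notMem_support_iff.mp hmem, zero_div]


lemma pderiv_integ_self (i : Fin 2) (p : P2) : pderiv i (integ i p) = p := by
  ext d
  rw [coeff_pderiv, coeff_integ]
  rw [if_neg (by simp)]
  rw [show d + Finsupp.single i 1 - Finsupp.single i 1 = d from add_tsub_cancel_right _ _]
  have h1 : (((d + Finsupp.single i 1 : Fin 2 →₀ ℕ) i : ℕ) : ℝ) = (d i : ℝ) + 1 := by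
    push_cast [Finsupp.add_apply, Finsupp.single_eq_same]; ring
  rw [h1, div_mul_cancel₀]
  positivity

lemma pderiv_integ_comm {i j : Fin 2} (h : j ≠ i) (p : P2) :
    pderiv j (integ i p) = integ i (pderiv j p) := by
  ext d
  rw [coeff_pderiv, coeff_integ, coeff_integ]
  have hji : ((d + Finsupp.single j 1 : Fin 2 →₀ ℕ)) i = d i := by
    rw [Finsupp.add_apply, Finsupp.single_eq_of_ne' h]; omega
  by_cases hd : d i = 0
  · rw [if_pos (by rw [hji]; exact hd), if_pos hd, zero_mul]
  · rw [if_neg (by rw [hji]; exact hd), if_neg hd, coeff_pderiv]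
    have he : d + Finsupp.single j 1 - Finsupp.single i 1
        = d - Finsupp.single i 1 + Finsupp.single j 1 := by
      ext x
      simp only [Finsupp.add_apply, Finsupp.tsub_apply]
      rcases eq_or_ne i x with rfl | hix
      · rw [Finsupp.single_eq_same, Finsupp.single_eq_of_ne' h]
        omega
      · rw [Finsupp.single_eq_of_ne' hix]
        omega
    have hj : ((d - Finsupp.single i 1 : Fin 2 →₀ ℕ)) j = d j := by
      rw [Finsupp.tsub_apply, Finsupp.single_eq_of_ne' (Ne.symm h)]
      omega
    rw [he, hj]
    have hji2 : ((d - Finsupp.single i 1 + Finsupp.single j 1 : Fin 2 →₀ ℕ)) j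
        = ((d - Finsupp.single i 1 : Fin 2 →₀ ℕ)) j + 1 := by
      rw [Finsupp.add_apply, Finsupp.single_eq_same]
    rw [hji]
    ring

lemma integ_tdeg_le (i : Fin 2) (p : P2) {n : ℕ} (h : p.totalDegree ≤ n) :
    (integ i p).totalDegree ≤ n + 1 := by
  rw [tdeg_le_iff]
  intro d hd
  rw [mem_support_iff, coeff_integ] at hd
  by_cases hdi : d i = 0
  · rw [if_pos hdi] at hd; exact absurd rfl hd
  · rw [if_neg hdi] at hd
    have hmem : coeff (d - Finsupp.single i 1) p ≠ 0 := by
      intro hc; rw [hc, zero_div] at hd; exact hd rfl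
    have := tdeg_le_iff.mp h _ (mem_support_iff.mpr hmem)
    have h0 : ((d - Finsupp.single i 1 : Fin 2 →₀ ℕ)) 0 + ((d - Finsupp.single i 1 : Fin 2 →₀ ℕ)) 1 + 1 = d 0 + d 1 := by
      fin_cases i <;>
        simp only [Finsupp.tsub_apply, Finsupp.single_apply, Fin.isValue, Fin.zero_eta, Fin.mk_one] at hdi ⊢ <;>
        simp only [show ((0:Fin 2) = 1) = False by simp, show ((1:Fin 2) = 0) = False by simp, if_true, if_false, eq_self_iff_true] <;>
        omega
    omega

lemma pderiv_tdeg_le (i : Fin 2) (p : P2) {n : ℕ} (h : p.totalDegree ≤ n + 1) :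
    (pderiv i p).totalDegree ≤ n := by
  rw [tdeg_le_iff]
  intro d hd
  rw [mem_support_iff, coeff_pderiv] at hd
  have hmem : coeff (d + Finsupp.single i 1) p ≠ 0 := fun hc => hd (by rw [hc, zero_mul])
  have := tdeg_le_iff.mp h _ (mem_support_iff.mpr hmem)
  have h0 : ((d + Finsupp.single i 1 : Fin 2 →₀ ℕ)) 0 + ((d + Finsupp.single i 1 : Fin 2 →₀ ℕ)) 1 = d 0 + d 1 + 1 := by
    fin_cases i <;>
      simp only [Finsupp.add_apply, Finsupp.single_apply, Fin.isValue, Fin.zero_eta, Fin.mk_one] <;>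
      simp only [show ((0:Fin 2) = 1) = False by simp, show ((1:Fin 2) = 0) = False by simp, if_true, if_false, eq_self_iff_true] <;>
      omega
  omega

lemma pderiv_comm' (p : P2) : pderiv 0 (pderiv 1 p) = pderiv 1 (pderiv 0 p) := by
  ext d
  rw [coeff_pderiv, coeff_pderiv, coeff_pderiv, coeff_pderiv]
  have he : d + Finsupp.single 0 1 + Finsupp.single 1 1
      = d + Finsupp.single 1 1 + Finsupp.single 0 1 := by
    ext x; simp only [Finsupp.add_apply]; omega
  have h1 : ((d + Finsupp.single 0 1 : Fin 2 →₀ ℕ)) 1 = d 1 := by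
    rw [Finsupp.add_apply, Finsupp.single_eq_of_ne (by decide)]; omega
  have h0 : ((d + Finsupp.single 1 1 : Fin 2 →₀ ℕ)) 0 = d 0 := by
    rw [Finsupp.add_apply, Finsupp.single_eq_of_ne (by decide)]; omega
  rw [he, h1, h0]
  ring

/-- Poincaré lemma with degree control. -/
lemma antideriv (P Q : P2) (h : pderiv 1 P = pderiv 0 Q) {n : ℕ}
    (hP : P.totalDegree ≤ n) (hQ : Q.totalDegree ≤ n) :
    ∃ u : P2, pderiv 0 u = P ∧ pderiv 1 u = Q ∧ u.totalDegree ≤ n + 1 := by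
  refine ⟨integ 0 P + integ 1 (Q - pderiv 1 (integ 0 P)), ?_, ?_, ?_⟩
  · rw [map_add, pderiv_integ_self, pderiv_integ_comm (by decide),
      map_sub, pderiv_comm', pderiv_integ_self, h]
    have : pderiv 0 Q - pderiv 0 Q = 0 := sub_self _
    rw [this]
    have : integ 1 (0 : P2) = 0 := by
      ext d; rw [coeff_integ]; split <;> simp
    rw [this, add_zero]
  · rw [map_add, pderiv_integ_self, add_sub_cancel]
  · apply le_trans (totalDegree_add _ _)
    rw [max_le_iff]
    constructor
    · exact integ_tdeg_le _ _ hP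
    · apply integ_tdeg_le
      apply le_trans (totalDegree_sub _ _) ?_
      rw [max_le_iff]
      exact ⟨hQ, pderiv_tdeg_le _ _ (integ_tdeg_le _ _ hP)⟩


lemma fin2_ext {d e : Fin 2 →₀ ℕ} (h0 : d 0 = e 0) (h1 : d 1 = e 1) : d = e := by
  ext x; fin_cases x <;> assumption

def lin (a b c : ℝ) : P2 := C a + C b * X 0 + C c * X 1

lemma e0_ne_zero : (Finsupp.single (0 : Fin 2) 1 : Fin 2 →₀ ℕ) ≠ 0 :=
  fun h => one_ne_zero (Finsupp.single_eq_zero.mp h)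
lemma e1_ne_zero : (Finsupp.single (1 : Fin 2) 1 : Fin 2 →₀ ℕ) ≠ 0 :=
  fun h => one_ne_zero (Finsupp.single_eq_zero.mp h)
lemma e0_ne_e1 : (Finsupp.single (0 : Fin 2) 1 : Fin 2 →₀ ℕ) ≠ Finsupp.single 1 1 := by
  intro h
  have := DFunLike.congr_fun h 0
  rw [Finsupp.single_eq_same, Finsupp.single_eq_of_ne (by decide)] at this
  exact one_ne_zero this

lemma coeff_lin (a b c : ℝ) (d : Fin 2 →₀ ℕ) :
    coeff d (lin a b c) = (if (0 : Fin 2 →₀ ℕ) = d then a else 0)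
      + (if Finsupp.single 0 1 = d then b else 0)
      + (if Finsupp.single 1 1 = d then c else 0) := by
  rw [lin, coeff_add, coeff_add, coeff_C, coeff_C_mul, coeff_C_mul, coeff_X', coeff_X']
  congr 1
  · congr 1
    split <;> simp
  · split <;> simp

lemma lin_repr {p : P2} (h : p.totalDegree ≤ 1) :
    p = lin (coeff 0 p) (coeff (Finsupp.single 0 1) p) (coeff (Finsupp.single 1 1) p) := by
  ext d
  rw [coeff_lin]
  by_cases h0 : (0 : Fin 2 →₀ ℕ) = d
  · rw [if_pos h0, if_neg (fun hc => e0_ne_zero (hc.trans h0.symm)),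
      if_neg (fun hc => e1_ne_zero (hc.trans h0.symm)), ← h0]
    ring
  · rw [if_neg h0]
    by_cases h1 : (Finsupp.single 0 1 : Fin 2 →₀ ℕ) = d
    · rw [if_pos h1, if_neg (fun hc => e0_ne_e1 (h1.trans hc.symm)), ← h1]
      ring
    · rw [if_neg h1]
      by_cases h2 : (Finsupp.single 1 1 : Fin 2 →₀ ℕ) = d
      · rw [if_pos h2, ← h2]; ring
      · rw [if_neg h2]
        by_contra hne
        have hd : d ∈ p.support := mem_support_iff.mpr (fun hc => hne (by rw [hc]; ring))
        have hle := tdeg_le_iff.mp h d hd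
        -- d 0 + d 1 ≤ 1, yet d ≠ 0, e0, e1
        rcases Nat.lt_or_ge (d 0) 1 with hd0 | hd0
        · rcases Nat.lt_or_ge (d 1) 1 with hd1 | hd1
          · exact h0 (fin2_ext (by simp; omega) (by simp; omega)).symm
          · apply h2
            apply (fin2_ext (e := d) ?_ ?_)
            · rw [Finsupp.single_eq_of_ne (by decide)]; omega
            · rw [Finsupp.single_eq_same]; omega
        · apply h1
          apply (fin2_ext (e := d) ?_ ?_)
          · rw [Finsupp.single_eq_same]; omega
          · rw [Finsupp.single_eq_of_ne (by decide)]; omega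

lemma eval_lin (a b c : ℝ) (g : Fin 2 → ℝ) : eval g (lin a b c) = a + b * g 0 + c * g 1 := by
  simp [lin]

lemma pderiv0_lin (a b c : ℝ) : pderiv 0 (lin a b c) = C b := by
  simp [lin, pderiv_mul]

lemma pderiv1_lin (a b c : ℝ) : pderiv 1 (lin a b c) = C c := by
  simp [lin, pderiv_mul]

lemma X0_dvd_iff {p : P2} :
    X 0 ∣ p ↔ ∀ d : Fin 2 →₀ ℕ, d 0 = 0 → coeff d p = 0 := by
  constructor
  · rintro ⟨q, rfl⟩ d hd
    rw [coeff_X_mul']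
    rw [if_neg]
    simp [Finsupp.mem_support_iff, hd]
  · intro h
    refine ⟨∑ d ∈ p.support, monomial (d - Finsupp.single 0 1) (coeff d p), ?_⟩
    rw [Finset.mul_sum]
    have : ∀ d ∈ p.support, X (0:Fin 2) * monomial (d - Finsupp.single 0 1) (coeff d p)
        = monomial d (coeff d p) := by
      intro d hd
      have hd0 : d 0 ≠ 0 := fun hc => mem_support_iff.mp hd (h d hc)
      have hde : Finsupp.single (0:Fin 2) 1 + (d - Finsupp.single 0 1) = d := by
        ext x
        simp only [Finsupp.add_apply, Finsupp.tsub_apply, Finsupp.single_apply]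
        rcases eq_or_ne (0 : Fin 2) x with rfl | hx
        · simp; omega
        · simp [hx]
      rw [X, monomial_mul, one_mul, hde]
    rw [Finset.sum_congr rfl this, support_sum_monomial_coeff]

lemma decomp_of_X0_dvd {w : P2} (h : X 0 ∣ pderiv 1 w) :
    ∃ q : P2, w = C (coeff 0 w) + X 0 * q := by
  have key : ∀ d : Fin 2 →₀ ℕ, d 0 = 0 → coeff d (w - C (coeff 0 w)) = 0 := by
    intro d hd
    rw [coeff_sub, coeff_C]
    by_cases h0 : (0 : Fin 2 →₀ ℕ) = d
    · rw [if_pos h0, ← h0]; ring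
    · rw [if_neg h0, sub_zero]
      have hd1 : d 1 ≠ 0 := by
        intro hc
        exact h0 (fin2_ext (by simp [hd]) (by simp [hc])).symm
      have := X0_dvd_iff.mp h (d - Finsupp.single 1 1) (by
        rw [Finsupp.tsub_apply, Finsupp.single_eq_of_ne (by decide)]; omega)
      rw [coeff_pderiv] at this
      have he : d - Finsupp.single 1 1 + Finsupp.single 1 1 = d := by
        ext x
        simp only [Finsupp.add_apply, Finsupp.tsub_apply, Finsupp.single_apply]
        rcases eq_or_ne (1 : Fin 2) x with rfl | hx
        · simp; omega
        · simp [hx]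
      rw [he] at this
      have hne : (((d - Finsupp.single 1 1 : Fin 2 →₀ ℕ) 1 : ℝ) + 1) ≠ 0 := by positivity
      have := mul_eq_zero.mp this
      tauto
  obtain ⟨q, hq⟩ := X0_dvd_iff.mpr key
  exact ⟨q, by rw [← hq]; ring⟩


/-- Chain rule for substitution by `t`. -/
lemma pderiv_aeval (t : Fin 2 → P2) (j : Fin 2) (p : P2) :
    pderiv j (aeval t p) =
      aeval t (pderiv 0 p) * pderiv j (t 0) + aeval t (pderiv 1 p) * pderiv j (t 1) := by
  induction p using MvPolynomial.induction_on with
  | C r => simp [aeval_C, MvPolynomial.algebraMap_eq, pderiv_C]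
  | add p q hp hq => simp only [map_add, hp, hq]; ring
  | mul_X p i hp =>
    have h01 : (0 : Fin 2) ≠ 1 := by decide
    have h10 : (1 : Fin 2) ≠ 0 := by decide
    fin_cases i <;>
      simp only [Fin.isValue, Fin.zero_eta, Fin.mk_one, map_mul, aeval_X, pderiv_mul,
        pderiv_X_self, pderiv_X_of_ne h01, pderiv_X_of_ne h10, mul_one, mul_zero, add_zero,
        map_add, map_zero, zero_add, hp] <;>
      ring

/-- Conjugating a nondegenerate linear form to `X 0`. -/
lemma exists_conj (a b c : ℝ) (h : b ≠ 0 ∨ c ≠ 0) :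
    ∃ F G : P2 →ₐ[ℝ] P2, (∀ p, F (G p) = p) ∧ (∀ p, G (F p) = p) ∧ F (lin a b c) = X 0 ∧
      G (X 0) = lin a b c := by
  have main : ∀ (F G : P2 →ₐ[ℝ] P2), F.comp G = AlgHom.id ℝ P2 → G.comp F = AlgHom.id ℝ P2 →
      F (lin a b c) = X 0 → G (X 0) = lin a b c →
      ∃ F G : P2 →ₐ[ℝ] P2, (∀ p, F (G p) = p) ∧ (∀ p, G (F p) = p) ∧ F (lin a b c) = X 0 ∧
        G (X 0) = lin a b c := by
    intro F G h1 h2 h3 h4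
    exact ⟨F, G, fun p => by rw [← AlgHom.comp_apply, h1, AlgHom.id_apply],
      fun p => by rw [← AlgHom.comp_apply, h2, AlgHom.id_apply], h3, h4⟩
  rcases h with hb | hc
  · have hbb : (C b : P2) * C b⁻¹ = 1 := by rw [← C_mul, mul_inv_cancel₀ hb, C_1]
    apply main (aeval ![(X 0 - C a - C c * X 1) * C b⁻¹, X 1])
      (aeval ![lin a b c, X 1])
    · apply algHom_ext
      intro i
      fin_cases i <;>
        simp only [Fin.isValue, Fin.zero_eta, Fin.mk_one, AlgHom.comp_apply, aeval_X,
          AlgHom.id_apply, Matrix.cons_val_zero, Matrix.cons_val_one, Matrix.head_cons, lin,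
          map_add, map_mul, map_sub, aeval_C, MvPolynomial.algebraMap_eq] <;>
        linear_combination (X 0 - C a - C c * X 1) * hbb
    · apply algHom_ext
      intro i
      fin_cases i <;>
        simp only [Fin.isValue, Fin.zero_eta, Fin.mk_one, AlgHom.comp_apply, aeval_X,
          AlgHom.id_apply, Matrix.cons_val_zero, Matrix.cons_val_one, Matrix.head_cons, lin,
          map_add, map_mul, map_sub, aeval_C, MvPolynomial.algebraMap_eq] <;>
        linear_combination X 0 * hbb
    · simp only [Fin.isValue, Fin.zero_eta, Fin.mk_one, lin, map_add, map_mul, aeval_X, aeval_C,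
        MvPolynomial.algebraMap_eq, Matrix.cons_val_zero, Matrix.cons_val_one, Matrix.head_cons]
      linear_combination (X 0 - C a - C c * X 1) * hbb
    · simp
  · have hcc : (C c : P2) * C c⁻¹ = 1 := by rw [← C_mul, mul_inv_cancel₀ hc, C_1]
    apply main (aeval ![X 1, (X 0 - C a - C b * X 1) * C c⁻¹])
      (aeval ![lin a b c, X 0])
    · apply algHom_ext
      intro i
      fin_cases i <;>
        simp only [Fin.isValue, Fin.zero_eta, Fin.mk_one, AlgHom.comp_apply, aeval_X,
          AlgHom.id_apply, Matrix.cons_val_zero, Matrix.cons_val_one, Matrix.head_cons, lin,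
          map_add, map_mul, map_sub, aeval_C, MvPolynomial.algebraMap_eq] <;>
        linear_combination (X 0 - C a - C b * X 1) * hcc
    · apply algHom_ext
      intro i
      fin_cases i <;>
        simp only [Fin.isValue, Fin.zero_eta, Fin.mk_one, AlgHom.comp_apply, aeval_X,
          AlgHom.id_apply, Matrix.cons_val_zero, Matrix.cons_val_one, Matrix.head_cons, lin,
          map_add, map_mul, map_sub, aeval_C, MvPolynomial.algebraMap_eq] <;>
        linear_combination X 1 * hcc
    · simp only [Fin.isValue, Fin.zero_eta, Fin.mk_one, lin, map_add, map_mul, aeval_X, aeval_C,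
        MvPolynomial.algebraMap_eq, Matrix.cons_val_zero, Matrix.cons_val_one, Matrix.head_cons]
      linear_combination (X 0 - C a - C b * X 1) * hcc
    · simp

lemma prime_X0 : Prime (X 0 : P2) := by
  have := comap_prime (f := (MvPolynomial.finSuccEquiv ℝ 1 : MvPolynomial (Fin 2) ℝ →+* Polynomial (MvPolynomial (Fin 1) ℝ)))
    (g := ((MvPolynomial.finSuccEquiv ℝ 1).symm : Polynomial (MvPolynomial (Fin 1) ℝ) →+* MvPolynomial (Fin 2) ℝ))
    (p := (X 0 : P2)) (fun p => by simp)
  apply this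
  show Prime ((MvPolynomial.finSuccEquiv ℝ 1) (X 0))
  rw [MvPolynomial.finSuccEquiv_X_zero]
  exact Polynomial.prime_X

lemma prime_lin (a b c : ℝ) (h : b ≠ 0 ∨ c ≠ 0) : Prime (lin a b c) := by
  obtain ⟨F, G, hFG, hGF, hF, hG⟩ := exists_conj a b c h
  exact comap_prime (f := (F : P2 →+* P2)) (g := (G : P2 →+* P2)) hGF
    (by show Prime (F (lin a b c)); rw [hF]; exact prime_X0)

/-- Key decomposition: if a nondegenerate linear form divides both partials, then
`u = C e + lin * q`. -/
lemma lin_dvd_decomp (a b c : ℝ) (h : b ≠ 0 ∨ c ≠ 0) {u : P2}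
    (h0 : lin a b c ∣ pderiv 0 u) (h1 : lin a b c ∣ pderiv 1 u) :
    ∃ e q, u = C e + lin a b c * q := by
  obtain ⟨F, G, hFG, hGF, hF, hG⟩ := exists_conj a b c h
  have hdvd : X 0 ∣ pderiv 1 (F u) := by
    rw [show F = aeval (⇑F ∘ X) from aeval_unique F, pderiv_aeval]
    rw [← aeval_unique F]
    apply dvd_add
    · exact Dvd.dvd.mul_right (hF ▸ (map_dvd F h0)) _
    · exact Dvd.dvd.mul_right (hF ▸ (map_dvd F h1)) _
  obtain ⟨q, hq⟩ := decomp_of_X0_dvd hdvd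
  refine ⟨coeff 0 (F u), G q, ?_⟩
  have hGC : ∀ r : ℝ, G (C r) = C r := fun r => by
    rw [← MvPolynomial.algebraMap_eq]; exact G.commutes r
  have hu := congrArg G hq
  rw [hGF] at hu
  conv_lhs => rw [hu]
  rw [map_add, map_mul, hG, hGC]

lemma coeff_lin_mul (a b c : ℝ) (p : P2) (d : Fin 2 →₀ ℕ) :
    coeff d (lin a b c * p) = a * coeff d p
      + b * (if (0:Fin 2) ∈ d.support then coeff (d - Finsupp.single 0 1) p else 0)
      + c * (if (1:Fin 2) ∈ d.support then coeff (d - Finsupp.single 1 1) p else 0) := by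
  rw [lin, add_mul, add_mul, coeff_add, coeff_add, coeff_C_mul,
    mul_assoc, mul_assoc, coeff_C_mul, coeff_C_mul, coeff_X_mul', coeff_X_mul']

/-- Multiplying by a nondegenerate linear form raises the degree by exactly 1. -/
lemma lin_mul_tdeg (a b c : ℝ) (h : b ≠ 0 ∨ c ≠ 0) {p : P2} (hp : p ≠ 0) :
    (lin a b c * p).totalDegree = p.totalDegree + 1 := by
  apply le_antisymm
  · calc (lin a b c * p).totalDegree ≤ (lin a b c).totalDegree + p.totalDegree :=
        totalDegree_mul _ _
    _ ≤ 1 + p.totalDegree := by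
        apply add_le_add_left
        rw [tdeg_le_iff]
        intro d hd
        rw [mem_support_iff, coeff_lin] at hd
        by_contra hge
        push_neg at hge
        have h0 : (0 : Fin 2 →₀ ℕ) ≠ d := by
          intro hc; rw [← hc] at hge; simp at hge
        have h1 : (Finsupp.single (0:Fin 2) 1 : Fin 2 →₀ ℕ) ≠ d := by
          intro hc; rw [← hc] at hge
          rw [Finsupp.single_eq_same, Finsupp.single_eq_of_ne (by decide)] at hge
          omega
        have h2 : (Finsupp.single (1:Fin 2) 1 : Fin 2 →₀ ℕ) ≠ d := by
          intro hc; rw [← hc] at hge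
          rw [Finsupp.single_eq_same, Finsupp.single_eq_of_ne (by decide)] at hge
          omega
        rw [if_neg h0, if_neg h1, if_neg h2] at hd
        simp at hd
    _ = p.totalDegree + 1 := by ring
  · -- lower bound
    -- pick d in support of p with d.sum = deg p, maximizing the relevant coordinate
    have hsupp : p.support.Nonempty := MvPolynomial.support_nonempty.mpr hp
    obtain ⟨dm, hdm, hdsum⟩ := Finset.exists_mem_eq_sup p.support hsupp
      (fun d => d.sum fun _ e => e)
    rcases h with hb | hc
    · -- maximize d 0 among top-degree monomials
      set S := p.support.filter (fun d => d 0 + d 1 = p.totalDegree) with hS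
      have hSne : S.Nonempty := ⟨dm, Finset.mem_filter.mpr ⟨hdm, by
        rw [← sum_fin2]; exact hdsum.symm⟩⟩
      obtain ⟨d, hdS, hdmax⟩ := Finset.exists_max_image S (fun d => d 0) hSne
      obtain ⟨hdsupp, hdeg⟩ := Finset.mem_filter.mp hdS
      -- coefficient of d + e0 in lin * p is b * coeff d p ≠ 0
      have hkey : coeff (d + Finsupp.single 0 1) (lin a b c * p) = b * coeff d p := by
        rw [coeff_lin_mul]
        have hc1 : coeff (d + Finsupp.single 0 1) p = 0 := by
          by_contra hc
          have := tdeg_le_iff.mp (le_refl p.totalDegree) _ (mem_support_iff.mpr hc)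
          have e0 : ((d + Finsupp.single 0 1 : Fin 2 →₀ ℕ)) 0 = d 0 + 1 := by simp
          have e1 : ((d + Finsupp.single 0 1 : Fin 2 →₀ ℕ)) 1 = d 1 := by
            rw [Finsupp.add_apply, Finsupp.single_eq_of_ne (by decide)]; omega
          omega
        have he : d + Finsupp.single 0 1 - Finsupp.single 0 1 = d := add_tsub_cancel_right _ _
        rw [he]
        have hmem0 : (0:Fin 2) ∈ (d + Finsupp.single 0 1).support := by
          rw [Finsupp.mem_support_iff]; simp
        rw [if_pos hmem0, hc1, mul_zero]
        -- third term vanishes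
        have hthird : (if (1:Fin 2) ∈ (d + Finsupp.single 0 1).support
            then coeff (d + Finsupp.single 0 1 - Finsupp.single 1 1) p else 0) = 0 := by
          split
          · rename_i hmem1
            rw [Finsupp.mem_support_iff] at hmem1
            have hd1 : d 1 ≠ 0 := by
              intro hc
              apply hmem1
              rw [Finsupp.add_apply, Finsupp.single_eq_of_ne (by decide), hc]
              rfl
            by_contra hcc
            have hmm : (d + Finsupp.single 0 1 - Finsupp.single 1 1) ∈ p.support :=
              mem_support_iff.mpr hcc
            have e0 : ((d + Finsupp.single 0 1 - Finsupp.single 1 1 : Fin 2 →₀ ℕ)) 0 = d 0 + 1 := by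
              rw [Finsupp.tsub_apply, Finsupp.add_apply, Finsupp.single_eq_same,
                Finsupp.single_eq_of_ne (by decide)]
              omega
            have e1 : ((d + Finsupp.single 0 1 - Finsupp.single 1 1 : Fin 2 →₀ ℕ)) 1 = d 1 - 1 := by
              rw [Finsupp.tsub_apply, Finsupp.add_apply, Finsupp.single_eq_same,
                Finsupp.single_eq_of_ne (by decide)]
              omega
            -- it's a top-degree monomial with bigger 0-coordinate: contradiction with maximality
            have hsum : (d + Finsupp.single 0 1 - Finsupp.single 1 1 : Fin 2 →₀ ℕ) 0
                + (d + Finsupp.single 0 1 - Finsupp.single 1 1 : Fin 2 →₀ ℕ) 1 = p.totalDegree := by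
              have hle := tdeg_le_iff.mp (le_refl p.totalDegree) _ hmm
              omega
            have hmemS : (d + Finsupp.single 0 1 - Finsupp.single 1 1) ∈ S :=
              Finset.mem_filter.mpr ⟨hmm, hsum⟩
            have := hdmax _ hmemS
            omega
          · rfl
        rw [hthird, mul_zero]
        ring
      have hne : coeff (d + Finsupp.single 0 1) (lin a b c * p) ≠ 0 := by
        rw [hkey]
        exact mul_ne_zero hb (mem_support_iff.mp hdsupp)
      have hle := tdeg_le_iff.mp (le_refl (lin a b c * p).totalDegree) _ (mem_support_iff.mpr hne)
      have e0 : ((d + Finsupp.single 0 1 : Fin 2 →₀ ℕ)) 0 = d 0 + 1 := by simp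
      have e1 : ((d + Finsupp.single 0 1 : Fin 2 →₀ ℕ)) 1 = d 1 := by
        rw [Finsupp.add_apply, Finsupp.single_eq_of_ne (by decide)]; omega
      omega
    · -- symmetric case: maximize d 1
      set S := p.support.filter (fun d => d 0 + d 1 = p.totalDegree) with hS
      have hSne : S.Nonempty := ⟨dm, Finset.mem_filter.mpr ⟨hdm, by
        rw [← sum_fin2]; exact hdsum.symm⟩⟩
      obtain ⟨d, hdS, hdmax⟩ := Finset.exists_max_image S (fun d => d 1) hSne
      obtain ⟨hdsupp, hdeg⟩ := Finset.mem_filter.mp hdS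
      have hkey : coeff (d + Finsupp.single 1 1) (lin a b c * p) = c * coeff d p := by
        rw [coeff_lin_mul]
        have hc1 : coeff (d + Finsupp.single 1 1) p = 0 := by
          by_contra hc
          have := tdeg_le_iff.mp (le_refl p.totalDegree) _ (mem_support_iff.mpr hc)
          have e1 : ((d + Finsupp.single 1 1 : Fin 2 →₀ ℕ)) 1 = d 1 + 1 := by simp
          have e0 : ((d + Finsupp.single 1 1 : Fin 2 →₀ ℕ)) 0 = d 0 := by
            rw [Finsupp.add_apply, Finsupp.single_eq_of_ne (by decide)]; omega
          omega
        have he : d + Finsupp.single 1 1 - Finsupp.single 1 1 = d := add_tsub_cancel_right _ _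
        rw [he]
        have hmem1 : (1:Fin 2) ∈ (d + Finsupp.single 1 1).support := by
          rw [Finsupp.mem_support_iff]; simp
        rw [if_pos hmem1, hc1, mul_zero]
        have hsecond : (if (0:Fin 2) ∈ (d + Finsupp.single 1 1).support
            then coeff (d + Finsupp.single 1 1 - Finsupp.single 0 1) p else 0) = 0 := by
          split
          · rename_i hmem0
            rw [Finsupp.mem_support_iff] at hmem0
            have hd0 : d 0 ≠ 0 := by
              intro hc
              apply hmem0
              rw [Finsupp.add_apply, Finsupp.single_eq_of_ne (by decide), hc]
              rfl
            by_contra hcc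
            have hmm : (d + Finsupp.single 1 1 - Finsupp.single 0 1) ∈ p.support :=
              mem_support_iff.mpr hcc
            have e1 : ((d + Finsupp.single 1 1 - Finsupp.single 0 1 : Fin 2 →₀ ℕ)) 1 = d 1 + 1 := by
              rw [Finsupp.tsub_apply, Finsupp.add_apply, Finsupp.single_eq_same,
                Finsupp.single_eq_of_ne (by decide)]
              omega
            have e0 : ((d + Finsupp.single 1 1 - Finsupp.single 0 1 : Fin 2 →₀ ℕ)) 0 = d 0 - 1 := by
              rw [Finsupp.tsub_apply, Finsupp.add_apply, Finsupp.single_eq_same,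
                Finsupp.single_eq_of_ne (by decide)]
              omega
            have hsum : (d + Finsupp.single 1 1 - Finsupp.single 0 1 : Fin 2 →₀ ℕ) 0
                + (d + Finsupp.single 1 1 - Finsupp.single 0 1 : Fin 2 →₀ ℕ) 1 = p.totalDegree := by
              have hle := tdeg_le_iff.mp (le_refl p.totalDegree) _ hmm
              omega
            have hmemS : (d + Finsupp.single 1 1 - Finsupp.single 0 1) ∈ S :=
              Finset.mem_filter.mpr ⟨hmm, hsum⟩
            have := hdmax _ hmemS
            omega
          · rfl
        rw [hsecond, mul_zero]
        ring
      have hne : coeff (d + Finsupp.single 1 1) (lin a b c * p) ≠ 0 := by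
        rw [hkey]
        exact mul_ne_zero hc (mem_support_iff.mp hdsupp)
      have hle := tdeg_le_iff.mp (le_refl (lin a b c * p).totalDegree) _ (mem_support_iff.mpr hne)
      have e1 : ((d + Finsupp.single 1 1 : Fin 2 →₀ ℕ)) 1 = d 1 + 1 := by simp
      have e0 : ((d + Finsupp.single 1 1 : Fin 2 →₀ ℕ)) 0 = d 0 := by
        rw [Finsupp.add_apply, Finsupp.single_eq_of_ne (by decide)]; omega
      omega

end
end Stmt6Aux

open Stmt6Aux in
/-- If `ξ = (λ0λ1λ2) ξ1 ∈ (λ0λ1λ2) P⁰_{k-3}(f; ℝ²)` is rot-free, then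
`ξ = ∇u` for some `u ∈ (λ0λ1λ2)² P_{k-5}(f)`. -/
theorem stmt_6 (k : ℕ) (hk : 7 ≤ k)
    (v : Fin 3 → Fin 2 → ℝ) (hv : AffineIndependent ℝ v)
    (lam : Fin 3 → MvPolynomial (Fin 2) ℝ)
    (hdeg : ∀ i, (lam i).totalDegree ≤ 1)
    (heval : ∀ i j, eval (v j) (lam i) = if i = j then 1 else 0)
    (ξ1 : Fin 2 → MvPolynomial (Fin 2) ℝ)
    (hξ1 : ∀ i, (ξ1 i).totalDegree ≤ k - 3)
    (hξ1v : ∀ i j, eval (v j) (ξ1 i) = 0)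
    (hrot : pderiv 1 (lam 0 * lam 1 * lam 2 * ξ1 0) -
      pderiv 0 (lam 0 * lam 1 * lam 2 * ξ1 1) = 0) :
    ∃ u1 : MvPolynomial (Fin 2) ℝ, u1.totalDegree ≤ k - 5 ∧
      ∀ i, lam 0 * lam 1 * lam 2 * ξ1 i =
        pderiv i ((lam 0 * lam 1 * lam 2) ^ 2 * u1) := by
  set aa : Fin 3 → ℝ := fun i => coeff 0 (lam i) with haa
  set bb : Fin 3 → ℝ := fun i => coeff (Finsupp.single 0 1) (lam i) with hbb
  set cc : Fin 3 → ℝ := fun i => coeff (Finsupp.single 1 1) (lam i) with hcc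
  have hrep : ∀ i, lam i = lin (aa i) (bb i) (cc i) := fun i => lin_repr (hdeg i)
  have hv1 : ∀ i, eval (v i) (lam i) = 1 := fun i => by simpa using heval i i
  have hvne : ∀ i j, i ≠ j → eval (v j) (lam i) = 0 := fun i j hij => by
    simpa [hij] using heval i j
  have hne : ∀ i, bb i ≠ 0 ∨ cc i ≠ 0 := by
    intro i
    by_contra hcon
    push_neg at hcon
    obtain ⟨h1, h2⟩ := hcon
    have hC : lam i = C (aa i) := by rw [hrep i, h1, h2]; simp [lin]
    obtain ⟨j, hj⟩ := exists_ne i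
    have e1 : aa i = 1 := by have := hv1 i; rwa [hC, eval_C] at this
    have e2 : aa i = 0 := by have := hvne i j (Ne.symm hj); rwa [hC, eval_C] at this
    rw [e1] at e2; exact one_ne_zero e2
  have hprime : ∀ i, Prime (lam i) := fun i => by
    rw [hrep i]; exact prime_lin _ _ _ (hne i)
  have hlamne : ∀ i, lam i ≠ 0 := fun i hc => by
    have := hv1 i; rw [hc] at this; simp at this
  have hndvd : ∀ i j, i ≠ j → ¬ lam i ∣ lam j := by
    rintro i j hij ⟨t, ht⟩
    have h1 := hv1 j
    rw [ht, eval_mul, hvne i j hij, zero_mul] at h1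
    exact one_ne_zero h1.symm
  -- antiderivative
  have hrot' : pderiv 1 (lam 0 * lam 1 * lam 2 * ξ1 0) =
      pderiv 0 (lam 0 * lam 1 * lam 2 * ξ1 1) := sub_eq_zero.mp hrot
  have hB3 : (lam 0 * lam 1 * lam 2).totalDegree ≤ 3 := by
    refine le_trans (totalDegree_mul _ _) ?_
    have := le_trans (totalDegree_mul (lam 0) (lam 1))
      (add_le_add (hdeg 0) (hdeg 1))
    have h2 := hdeg 2
    omega
  have hdegP : ∀ i : Fin 2, (lam 0 * lam 1 * lam 2 * ξ1 i).totalDegree ≤ k := by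
    intro i
    refine le_trans (totalDegree_mul _ _) ?_
    have := hξ1 i
    omega
  obtain ⟨u, hu0, hu1, hudeg⟩ := antideriv _ _ hrot' (hdegP 0) (hdegP 1)
  have heqd : ∀ j : Fin 2, pderiv j u = lam 0 * lam 1 * lam 2 * ξ1 j := by
    intro j; fin_cases j
    · exact hu0
    · exact hu1
  -- decompositions along each lam i
  have hdvdP : ∀ i : Fin 3, ∀ j : Fin 2, lam i ∣ pderiv j u := by
    intro i j
    rw [heqd j]
    fin_cases i
    · exact ((dvd_mul_right (lam 0) (lam 1)).mul_right (lam 2)).mul_right _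
    · exact ((dvd_mul_left (lam 1) (lam 0)).mul_right (lam 2)).mul_right _
    · exact (dvd_mul_left (lam 2) (lam 0 * lam 1)).mul_right _
  have hdecomp : ∀ i : Fin 3, ∃ e q, u = C e + lam i * q := by
    intro i
    have h0 : lin (aa i) (bb i) (cc i) ∣ pderiv 0 u := by rw [← hrep i]; exact hdvdP i 0
    have h1 : lin (aa i) (bb i) (cc i) ∣ pderiv 1 u := by rw [← hrep i]; exact hdvdP i 1
    obtain ⟨e, q, hq⟩ := lin_dvd_decomp _ _ _ (hne i) h0 h1
    exact ⟨e, q, by rw [hq, ← hrep i]⟩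
  obtain ⟨e0, q0, hq0⟩ := hdecomp 0
  obtain ⟨e1, q1, hq1⟩ := hdecomp 1
  obtain ⟨e2, q2, hq2⟩ := hdecomp 2
  have hev : ∀ (em : ℝ) (qm : MvPolynomial (Fin 2) ℝ) (i j : Fin 3), i ≠ j →
      u = C em + lam i * qm → eval (v j) u = em := by
    intro em qm i j hij hu
    rw [hu, eval_add, eval_C, eval_mul, hvne i j hij, zero_mul, add_zero]
  have he01 : e0 = e1 := by
    rw [← hev e0 q0 0 2 (by decide) hq0, ← hev e1 q1 1 2 (by decide) hq1]
  have he21 : e2 = e1 := by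
    rw [← hev e2 q2 2 0 (by decide) hq2, ← hev e1 q1 1 0 (by decide) hq1]
  -- combine: lam0*lam1*lam2 ∣ u - C e1
  have combine : ∀ m : MvPolynomial (Fin 2) ℝ,
      lam 0 ∣ m → lam 1 ∣ m → lam 2 ∣ m → ∃ z, m = lam 0 * lam 1 * lam 2 * z := by
    intro m ⟨m1, hm1⟩ h1 h2
    have h1' : lam 1 ∣ lam 0 * m1 := hm1 ▸ h1
    rcases (hprime 1).2.2 _ _ h1' with hx | hx
    · exact absurd hx (hndvd 1 0 (by decide))
    obtain ⟨m2, hm2⟩ := hx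
    have h2' : lam 2 ∣ lam 0 * (lam 1 * m2) := by rw [← hm2, ← hm1]; exact h2
    rcases (hprime 2).2.2 _ _ h2' with hy | hy
    · exact absurd hy (hndvd 2 0 (by decide))
    rcases (hprime 2).2.2 _ _ hy with hz | hz
    · exact absurd hz (hndvd 2 1 (by decide))
    obtain ⟨m3, hm3⟩ := hz
    exact ⟨m3, by rw [hm1, hm2, hm3]; ring⟩
  have hd0 : lam 0 ∣ u - C e1 := ⟨q0, by rw [hq0, he01]; ring⟩
  have hd1 : lam 1 ∣ u - C e1 := ⟨q1, by rw [hq1]; ring⟩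
  have hd2 : lam 2 ∣ u - C e1 := ⟨q2, by rw [hq2, he21]; ring⟩
  obtain ⟨w, hw⟩ := combine _ hd0 hd1 hd2
  -- now each lam i divides w
  have hIsUnitC : ∀ r : ℝ, r ≠ 0 → IsUnit (C r : MvPolynomial (Fin 2) ℝ) := by
    intro r hr
    exact ⟨⟨C r, C r⁻¹, by rw [← C_mul, mul_inv_cancel₀ hr, C_1],
      by rw [← C_mul, inv_mul_cancel₀ hr, C_1]⟩, rfl⟩
  have step : ∀ i j l : Fin 3, i ≠ j → i ≠ l →
      lam i * lam j * lam l = lam 0 * lam 1 * lam 2 → lam i ∣ w := by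
    intro i j l hij hil hperm
    have huw : u = C e1 + lam i * lam j * lam l * w := by
      rw [hperm]
      have : u - C e1 = lam 0 * lam 1 * lam 2 * w := hw
      linear_combination this
    have key : ∀ (jj : Fin 2) (g : ℝ), g ≠ 0 → pderiv jj (lam i) = C g → lam i ∣ w := by
      intro jj g hg hder
      have h0 : pderiv jj u = lam i * lam j * lam l * ξ1 jj := by
        rw [heqd jj, ← hperm]
      rw [huw] at h0
      rw [map_add, pderiv_C, zero_add] at h0
      rw [pderiv_mul, pderiv_mul, pderiv_mul, hder] at h0
      have hdvd : lam i ∣ C g * (lam j * lam l * w) := by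
        refine ⟨lam j * lam l * ξ1 jj - pderiv jj (lam j) * lam l * w -
          lam j * pderiv jj (lam l) * w - lam j * lam l * pderiv jj w, ?_⟩
        linear_combination h0
      rcases (hprime i).2.2 _ _ hdvd with hx | hx
      · exact absurd ((hprime i).not_unit)
          (not_not.mpr (isUnit_of_dvd_unit hx (hIsUnitC g hg)))
      rcases (hprime i).2.2 _ _ hx with hy | hy
      · rcases (hprime i).2.2 _ _ hy with hz | hz
        · exact absurd hz (hndvd i j hij)
        · exact absurd hz (hndvd i l hil)
      · exact hy
    rcases hne i with hb | hc
    · exact key 0 (bb i) hb (by rw [hrep i, pderiv0_lin])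
    · exact key 1 (cc i) hc (by rw [hrep i, pderiv1_lin])
  have hw0 : lam 0 ∣ w := step 0 1 2 (by decide) (by decide) rfl
  have hw1 : lam 1 ∣ w := step 1 0 2 (by decide) (by decide) (by ring)
  have hw2 : lam 2 ∣ w := step 2 0 1 (by decide) (by decide) (by ring)
  obtain ⟨u1, hu1w⟩ := combine _ hw0 hw1 hw2
  have hsq : (lam 0 * lam 1 * lam 2) ^ 2 * u1 = u - C e1 := by
    linear_combination -hw - (lam 0 * lam 1 * lam 2) * hu1w
  have hfinal : ∀ i : Fin 2, lam 0 * lam 1 * lam 2 * ξ1 i =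
      pderiv i ((lam 0 * lam 1 * lam 2) ^ 2 * u1) := by
    intro i
    rw [hsq, map_sub, pderiv_C, sub_zero, heqd i]
  refine ⟨u1, ?_, hfinal⟩
  by_cases hz : u1 = 0
  · rw [hz]; simp
  -- degree computation
  have harr : (lam 0 * lam 1 * lam 2) ^ 2 * u1 =
      lam 0 * (lam 0 * (lam 1 * (lam 1 * (lam 2 * (lam 2 * u1))))) := by ring
  have n1 : lam 2 * u1 ≠ 0 := mul_ne_zero (hlamne 2) hz
  have n2 : lam 2 * (lam 2 * u1) ≠ 0 := mul_ne_zero (hlamne 2) n1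
  have n3 : lam 1 * (lam 2 * (lam 2 * u1)) ≠ 0 := mul_ne_zero (hlamne 1) n2
  have n4 : lam 1 * (lam 1 * (lam 2 * (lam 2 * u1))) ≠ 0 := mul_ne_zero (hlamne 1) n3
  have n5 : lam 0 * (lam 1 * (lam 1 * (lam 2 * (lam 2 * u1)))) ≠ 0 :=
    mul_ne_zero (hlamne 0) n4
  have dstep : ∀ (i : Fin 3) (p : MvPolynomial (Fin 2) ℝ), p ≠ 0 →
      (lam i * p).totalDegree = p.totalDegree + 1 := by
    intro i p hp
    rw [hrep i]
    exact lin_mul_tdeg _ _ _ (hne i) hp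
  have hdeg6 : ((lam 0 * lam 1 * lam 2) ^ 2 * u1).totalDegree = u1.totalDegree + 6 := by
    rw [harr, dstep 0 _ n5, dstep 0 _ n4, dstep 1 _ n3, dstep 1 _ n2, dstep 2 _ n1,
      dstep 2 _ hz]
  have hle : u1.totalDegree + 6 ≤ k + 1 := by
    rw [← hdeg6, hsq]
    refine le_trans (totalDegree_sub _ _) ?_
    rw [max_le_iff]
    exact ⟨hudeg, le_trans (totalDegree_C _).le (by omega)⟩
  omega
end

section
/- Let f be a nondegenerate triangle in R² and k ≥ 7. If u = (λ0λ1λ2)³ u1 with u1 ∈ P_{k−7}(f), then the Hessian ∇²u lies in (λ0λ1λ2) P^{(0)}_{k−3}(f; S_{2×2}), where S_{2×2} denotes symmetric 2×2 matrices. -/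
open MvPolynomial

private lemma pd_totalDegree_le {σ R : Type*} [CommRing R] (i : σ) (p : MvPolynomial σ R) :
    (pderiv i p).totalDegree ≤ p.totalDegree - 1 := by
  classical
  conv_lhs => rw [p.as_sum]
  rw [map_sum]
  apply totalDegree_finsetSum_le
  intro s hs
  rw [pderiv_monomial]
  by_cases h : s i = 0
  · simp [h]
  · refine (totalDegree_monomial_le _ _).trans ?_
    have hle : Finsupp.single i 1 ≤ s := by
      rw [Finsupp.single_le_iff]; omega
    have hadd : s - Finsupp.single i 1 + Finsupp.single i 1 = s := tsub_add_cancel_of_le hle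
    have hsum : (s - Finsupp.single i 1).sum (fun _ e => e) + 1 = s.sum (fun _ e => e) := by
      conv_rhs => rw [← hadd]
      rw [Finsupp.sum_add_index' (fun _ => rfl) (fun _ _ _ => rfl), Finsupp.sum_single_index rfl]
    have := le_totalDegree hs
    simp only [Function.id_def]
    omega

private lemma pd_zero_of_deg_zero {σ R : Type*} [CommRing R] (i : σ) (p : MvPolynomial σ R)
    (h : p.totalDegree = 0) : pderiv i p = 0 := by
  classical
  conv_lhs => rw [p.as_sum]
  rw [map_sum]
  apply Finset.sum_eq_zero
  intro s hs
  rw [pderiv_monomial, (totalDegree_eq_zero_iff σ p).mp h s hs i]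
  simp

private lemma pd_comm {σ R : Type*} [CommRing R] (i j : σ) (p : MvPolynomial σ R) :
    pderiv i (pderiv j p) = pderiv j (pderiv i p) := by
  classical
  induction p using MvPolynomial.induction_on with
  | C a => simp [pderiv_C]
  | add p q hp hq => simp [hp, hq]
  | mul_X p n ih =>
    have hX : ∀ a b : σ, pderiv a (pderiv b (X n : MvPolynomial σ R)) = 0 := by
      intro a b
      rcases eq_or_ne n b with rfl | h
      · rw [pderiv_X_self, pderiv_one]
      · rw [pderiv_X_of_ne h, map_zero]
    simp only [pderiv_mul, map_add, pderiv_mul, ih, hX, mul_zero, add_zero]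
    ring

/-- If `u = (λ0λ1λ2)³ u1` with `u1 ∈ P_{k-7}(f)`, then the Hessian `∇²u` lies in
`(λ0λ1λ2) P⁰_{k-3}(f; S₂ₓ₂)`: symmetric-matrix polynomials of degree `≤ k-3`
vanishing at the vertices, multiplied by the cubic bubble. -/
theorem stmt_8 (k : ℕ) (hk : 7 ≤ k)
    (v : Fin 3 → Fin 2 → ℝ) (hv : AffineIndependent ℝ v)
    (lam : Fin 3 → MvPolynomial (Fin 2) ℝ)
    (hdeg : ∀ i, (lam i).totalDegree ≤ 1)
    (heval : ∀ i j, eval (v j) (lam i) = if i = j then 1 else 0)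
    (u1 : MvPolynomial (Fin 2) ℝ) (hu1 : u1.totalDegree ≤ k - 7) :
    ∃ σ1 : Fin 2 → Fin 2 → MvPolynomial (Fin 2) ℝ,
      (∀ i j, (σ1 i j).totalDegree ≤ k - 3) ∧
      (∀ i j, σ1 i j = σ1 j i) ∧
      (∀ i j l, eval (v l) (σ1 i j) = 0) ∧
      (∀ i j, pderiv i (pderiv j ((lam 0 * lam 1 * lam 2) ^ 3 * u1)) =
        lam 0 * lam 1 * lam 2 * σ1 i j) := by
  set b : MvPolynomial (Fin 2) ℝ := lam 0 * lam 1 * lam 2 with hbdef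
  -- degree facts
  have hb : b.totalDegree ≤ 3 := by
    have h01 := totalDegree_mul (lam 0) (lam 1)
    have h012 := totalDegree_mul (lam 0 * lam 1) (lam 2)
    have := hdeg 0; have := hdeg 1; have := hdeg 2
    rw [hbdef]; omega
  have hdb : ∀ i : Fin 2, (pderiv i b).totalDegree ≤ 2 := by
    intro i; have := pd_totalDegree_le i b; omega
  have hddb : ∀ i j : Fin 2, (pderiv i (pderiv j b)).totalDegree ≤ 1 := by
    intro i j
    have h1 := pd_totalDegree_le i (pderiv j b)
    have := hdb j; omega
  have hdu : ∀ i : Fin 2, pderiv i u1 = 0 ∨ (pderiv i u1).totalDegree + 8 ≤ k := by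
    intro i
    by_cases h : u1.totalDegree = 0
    · exact Or.inl (pd_zero_of_deg_zero i u1 h)
    · right; have := pd_totalDegree_le i u1; omega
  have hddu : ∀ i j : Fin 2,
      pderiv i (pderiv j u1) = 0 ∨ (pderiv i (pderiv j u1)).totalDegree + 9 ≤ k := by
    intro i j
    rcases hdu j with h | h
    · left; rw [h, map_zero]
    · by_cases h0 : (pderiv j u1).totalDegree = 0
      · exact Or.inl (pd_zero_of_deg_zero i _ h0)
      · right; have := pd_totalDegree_le i (pderiv j u1); omega
  -- vertex evaluation facts
  have hbv : ∀ l, eval (v l) b = 0 := by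
    intro l
    rw [hbdef]
    fin_cases l <;> simp [heval]
  have hdbv : ∀ (i : Fin 2) l, eval (v l) (pderiv i b) = 0 := by
    intro i l
    rw [hbdef, pderiv_mul, pderiv_mul]
    fin_cases l <;> simp [heval]
  refine ⟨fun i j =>
      C 6 * pderiv i b * pderiv j b * u1
    + C 3 * b * pderiv i (pderiv j b) * u1
    + C 3 * b * pderiv j b * pderiv i u1
    + C 3 * b * pderiv i b * pderiv j u1
    + b ^ 2 * pderiv i (pderiv j u1), ?_, ?_, ?_, ?_⟩
  · -- degree bound
    intro i j
    have hadd : ∀ p q : MvPolynomial (Fin 2) ℝ, p.totalDegree ≤ k - 3 →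
        q.totalDegree ≤ k - 3 → (p + q).totalDegree ≤ k - 3 := fun p q hp hq =>
      (totalDegree_add p q).trans (max_le hp hq)
    apply hadd; apply hadd; apply hadd; apply hadd
    · have h1 := totalDegree_mul (C (6:ℝ)) (pderiv i b)
      have h2 := totalDegree_mul (C (6:ℝ) * pderiv i b) (pderiv j b)
      have h3 := totalDegree_mul (C (6:ℝ) * pderiv i b * pderiv j b) u1
      have hc : (C (6:ℝ) : MvPolynomial (Fin 2) ℝ).totalDegree = 0 := totalDegree_C _
      have := hdb i; have := hdb j; omega
    · have h1 := totalDegree_mul (C (3:ℝ)) b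
      have h2 := totalDegree_mul (C (3:ℝ) * b) (pderiv i (pderiv j b))
      have h3 := totalDegree_mul (C (3:ℝ) * b * pderiv i (pderiv j b)) u1
      have hc : (C (3:ℝ) : MvPolynomial (Fin 2) ℝ).totalDegree = 0 := totalDegree_C _
      have := hddb i j; omega
    · rcases hdu i with h | h
      · simp [h]
      · have h1 := totalDegree_mul (C (3:ℝ)) b
        have h2 := totalDegree_mul (C (3:ℝ) * b) (pderiv j b)
        have h3 := totalDegree_mul (C (3:ℝ) * b * pderiv j b) (pderiv i u1)
        have hc : (C (3:ℝ) : MvPolynomial (Fin 2) ℝ).totalDegree = 0 := totalDegree_C _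
        have := hdb j; omega
    · rcases hdu j with h | h
      · simp [h]
      · have h1 := totalDegree_mul (C (3:ℝ)) b
        have h2 := totalDegree_mul (C (3:ℝ) * b) (pderiv i b)
        have h3 := totalDegree_mul (C (3:ℝ) * b * pderiv i b) (pderiv j u1)
        have hc : (C (3:ℝ) : MvPolynomial (Fin 2) ℝ).totalDegree = 0 := totalDegree_C _
        have := hdb i; omega
    · rcases hddu i j with h | h
      · simp [h]
      · have h1 := totalDegree_mul (b^2) (pderiv i (pderiv j u1))
        have h2 := totalDegree_mul b b
        have h3 : (b^2).totalDegree ≤ 6 := by rw [sq]; omega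
        omega
  · -- symmetry
    intro i j
    dsimp only
    rw [pd_comm i j b, pd_comm i j u1]
    ring
  · -- vanishing at vertices
    intro i j l
    simp [hbv, hdbv]
  · -- Hessian identity
    intro i j
    dsimp only
    have c3 : ((3:ℕ) : MvPolynomial (Fin 2) ℝ) = C 3 := by
      rw [← C_eq_coe_nat]; norm_num
    have c2 : ((2:ℕ) : MvPolynomial (Fin 2) ℝ) = C 2 := by
      rw [← C_eq_coe_nat]; norm_num
    have key3 : ∀ m : Fin 2, pderiv m (b ^ 3) = C 3 * b ^ 2 * pderiv m b := by
      intro m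
      rw [pderiv_pow, c3]
      try norm_num
    have key2 : ∀ m : Fin 2, pderiv m (b ^ 2) = C 2 * b * pderiv m b := by
      intro m
      rw [pderiv_pow, c2]
      try norm_num
    rw [pderiv_mul (f := b ^ 3) (g := u1), key3 j, map_add,
      pderiv_mul (f := C 3 * b ^ 2 * pderiv j b) (g := u1),
      pderiv_mul (f := C 3 * b ^ 2) (g := pderiv j b),
      pderiv_mul (f := C 3) (g := b ^ 2), pderiv_C, key2 i,
      pderiv_mul (f := b ^ 3) (g := pderiv j u1), key3 i]
    have hC6 : (C (6:ℝ) : MvPolynomial (Fin 2) ℝ) = C 3 * C 2 := by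
      rw [← map_mul]; norm_num
    rw [hC6]
    ring
end
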